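/- arXiv:1804.08418 — 5 statements merged into one kernel-verified Lean document; each statement's English description precedes it below -/
import Mathlib

section
/- Let Φ : ℝ^n ⇉ ℝ^m be a polyhedral sublinear mapping and 𝓛 ⊆ ℝ^m a linear subspace. If H(Φ|𝓛) > 0, then there exist b ∈ Im(Φ) and u ∈ dom(Φ) such that 0 < dist_𝓛(b, Φ(u)) < ∞ and dist(u, Φ⁻¹(b)) = H(Φ|𝓛) · dist_𝓛(b, Φ(u)). -/
/-- The graph of a set-valued mapping. -/
def svGraph {n m : ℕ} (Φ : (Fin n → ℝ) → Set (Fin m → ℝ)) :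
    Set ((Fin n → ℝ) × (Fin m → ℝ)) :=
  {p | p.2 ∈ Φ p.1}

/-- A polyhedral cone: an intersection of finitely many closed halfspaces through
the origin. -/
def IsPolyhedralCone {E : Type*} [AddCommGroup E] [Module ℝ E] (K : Set E) : Prop :=
  ∃ (k : ℕ) (f : Fin k → (E →ₗ[ℝ] ℝ)), K = {x | ∀ i, 0 ≤ f i x}

/-- The tangent cone to `K` at `p`: `{z | p + t • z ∈ K for some t > 0}`. -/
def tangConeAt {E : Type*} [AddCommGroup E] [Module ℝ E] (K : Set E) (p : E) : Set E :=
  {z | ∃ t : ℝ, 0 < t ∧ p + t • z ∈ K}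

/-- The collection `𝓣(K)` of tangent cones to `K` at its points. -/
def tangentCones {E : Type*} [AddCommGroup E] [Module ℝ E] (K : Set E) : Set (Set E) :=
  {T | ∃ p ∈ K, T = tangConeAt K p}

/-- The set-valued mapping `Φ_T` with graph `T` is relatively surjective:
its image is a linear subspace. -/
def RelSurjGraph {n m : ℕ} (T : Set ((Fin n → ℝ) × (Fin m → ℝ))) : Prop :=
  ∃ W : Submodule ℝ (Fin m → ℝ), {y | ∃ x, (x, y) ∈ T} = (W : Set (Fin m → ℝ))

/-- `‖Φ_T⁻¹ | 𝓛‖ = max_{y ∈ Im(Φ_T) ∩ 𝓛, ‖y‖ ≤ 1} min_{x ∈ Φ_T⁻¹(y)} ‖x‖`. -/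
noncomputable def nrmInvRes {n m : ℕ} (T : Set ((Fin n → ℝ) × (Fin m → ℝ)))
    (L : Submodule ℝ (Fin m → ℝ)) : ℝ :=
  sSup {t | ∃ y : Fin m → ℝ, (∃ x, (x, y) ∈ T) ∧ y ∈ L ∧ ‖y‖ ≤ 1 ∧
    t = sInf {r | ∃ x : Fin n → ℝ, (x, y) ∈ T ∧ r = ‖x‖}}

/-- The Hoffman constant `H(Φ|𝓛) = max_{T ∈ S(Φ)} ‖Φ_T⁻¹|𝓛‖`. -/
noncomputable def HoffSV {n m : ℕ} (Φ : (Fin n → ℝ) → Set (Fin m → ℝ))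
    (L : Submodule ℝ (Fin m → ℝ)) : ℝ :=
  sSup {t | ∃ T ∈ tangentCones (svGraph Φ), RelSurjGraph T ∧ t = nrmInvRes T L}

/-- aux: minimal norm of a preimage. -/
noncomputable def dfun {n m : ℕ} (T : Set ((Fin n → ℝ) × (Fin m → ℝ)))
    (y : Fin m → ℝ) : ℝ :=
  sInf {r | ∃ x : Fin n → ℝ, (x, y) ∈ T ∧ r = ‖x‖}

lemma dfun_bddBelow {n m : ℕ} (T : Set ((Fin n → ℝ) × (Fin m → ℝ))) (y : Fin m → ℝ) :
    BddBelow {r | ∃ x : Fin n → ℝ, (x, y) ∈ T ∧ r = ‖x‖} :=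
  ⟨0, by rintro r ⟨x, -, rfl⟩; exact norm_nonneg x⟩

lemma dfun_le {n m : ℕ} {T : Set ((Fin n → ℝ) × (Fin m → ℝ))} {y : Fin m → ℝ}
    {x : Fin n → ℝ} (h : (x, y) ∈ T) : dfun T y ≤ ‖x‖ :=
  csInf_le (dfun_bddBelow T y) ⟨x, h, rfl⟩

lemma dfun_nonneg {n m : ℕ} (T : Set ((Fin n → ℝ) × (Fin m → ℝ))) (y : Fin m → ℝ) :
    0 ≤ dfun T y :=
  Real.sInf_nonneg (by rintro r ⟨x, -, rfl⟩; exact norm_nonneg x)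

lemma le_dfun {n m : ℕ} {T : Set ((Fin n → ℝ) × (Fin m → ℝ))} {y : Fin m → ℝ}
    (hne : ∃ x, (x, y) ∈ T) {c : ℝ} (h : ∀ x : Fin n → ℝ, (x, y) ∈ T → c ≤ ‖x‖) :
    c ≤ dfun T y := by
  obtain ⟨x0, hx0⟩ := hne
  exact le_csInf ⟨‖x0‖, x0, hx0, rfl⟩ (by rintro r ⟨x, hx, rfl⟩; exact h x hx)

/-- `dfun` is sub-homogeneous under positive scaling, assuming T is a cone. -/
lemma dfun_smul_le {n m : ℕ} {T : Set ((Fin n → ℝ) × (Fin m → ℝ))}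
    (hTsmul : ∀ (c : ℝ), 0 ≤ c → ∀ z ∈ T, c • z ∈ T)
    {y : Fin m → ℝ} (hne : ∃ x, (x, y) ∈ T) {c : ℝ} (hc : 0 < c) :
    dfun T (c • y) ≤ c * dfun T y := by
  rw [← div_le_iff₀' hc]
  refine le_dfun hne (fun x hx => ?_)
  rw [div_le_iff₀ hc, mul_comm]
  have hmem : (c • x, c • y) ∈ T := by
    have := hTsmul c hc.le (x, y) hx
    simpa [Prod.smul_mk] using this
  calc dfun T (c • y) ≤ ‖c • x‖ := dfun_le hmem
    _ = c * ‖x‖ := by rw [norm_smul, Real.norm_eq_abs, abs_of_pos hc]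

/-- subadditivity of dfun assuming T closed under addition -/
lemma dfun_add_le {n m : ℕ} {T : Set ((Fin n → ℝ) × (Fin m → ℝ))}
    (hTadd : ∀ z1 ∈ T, ∀ z2 ∈ T, z1 + z2 ∈ T)
    {y1 y2 : Fin m → ℝ} (h1 : ∃ x, (x, y1) ∈ T) (h2 : ∃ x, (x, y2) ∈ T) :
    dfun T (y1 + y2) ≤ dfun T y1 + dfun T y2 := by
  obtain ⟨x1, hx1⟩ := h1
  obtain ⟨x2, hx2⟩ := h2
  have key : ∀ a : Fin n → ℝ, (a, y1) ∈ T → ∀ b : Fin n → ℝ, (b, y2) ∈ T →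
      dfun T (y1 + y2) ≤ ‖a‖ + ‖b‖ := by
    intro a ha b hb
    have hmem : (a + b, y1 + y2) ∈ T := by
      have := hTadd (a, y1) ha (b, y2) hb
      simpa [Prod.mk_add_mk] using this
    exact (dfun_le hmem).trans (norm_add_le a b)
  have h1' : dfun T (y1 + y2) - dfun T y2 ≤ dfun T y1 := by
    refine le_dfun ⟨x1, hx1⟩ (fun a ha => ?_)
    rw [sub_le_iff_le_add]
    have : dfun T (y1 + y2) - ‖a‖ ≤ dfun T y2 := by
      refine le_dfun ⟨x2, hx2⟩ (fun b hb => ?_)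
      linarith [key a ha b hb]
    linarith
  linarith

lemma tangChar {E : Type*} [AddCommGroup E] [Module ℝ E] {k : ℕ}
    (f : Fin k → (E →ₗ[ℝ] ℝ)) {p : E} (hp : ∀ i, 0 ≤ f i p) :
    tangConeAt {x | ∀ i, 0 ≤ f i x} p = {z | ∀ i, f i p = 0 → 0 ≤ f i z} := by
  ext z
  constructor
  · rintro ⟨t, ht, hmem⟩ i hi
    have h := hmem i
    simp only [Set.mem_setOf_eq, map_add, map_smul, smul_eq_mul, hi, zero_add] at h
    exact nonneg_of_mul_nonneg_right h ht
  · intro hz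
    set g : Fin k → ℝ := fun i => if f i z < 0 then f i p / (-(f i z)) else 1 with hg
    set F : Finset ℝ := insert (1:ℝ) (Finset.image g Finset.univ) with hF
    have hFne : F.Nonempty := ⟨1, Finset.mem_insert_self _ _⟩
    set t : ℝ := F.min' hFne with htdef
    have hgpos : ∀ i, 0 < g i := by
      intro i
      by_cases h : f i z < 0
      · have hpi : 0 < f i p := by
          rcases lt_or_eq_of_le (hp i) with h' | h'
          · exact h'
          · exact absurd (hz i h'.symm) (not_le.2 h)
        simp only [hg, if_pos h]
        exact div_pos hpi (by linarith)
      · simp only [hg, if_neg h]; norm_num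
    have htpos : 0 < t := by
      have := F.min'_mem hFne
      rw [← htdef] at this
      rcases Finset.mem_insert.1 this with h | h
      · rw [h]; norm_num
      · obtain ⟨i, -, hi⟩ := Finset.mem_image.1 h
        rw [← hi]; exact hgpos i
    refine ⟨t, htpos, fun i => ?_⟩
    simp only [Set.mem_setOf_eq, map_add, map_smul, smul_eq_mul]
    by_cases h : f i z < 0
    · have hle : t ≤ g i := F.min'_le _
        (Finset.mem_insert_of_mem (Finset.mem_image_of_mem g (Finset.mem_univ i)))
      rw [hg] at hle
      simp only [if_pos h] at hle
      have : t * (-(f i z)) ≤ f i p := by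
        rw [← le_div_iff₀ (by linarith)]; linarith [hle]
      nlinarith
    · push_neg at h
      have := hp i
      nlinarith [htpos.le]


open Metric in
set_option maxHeartbeats 1000000 in
/-- Theorem 1, tightness: if `H(Φ|𝓛) > 0` then there exist
`b ∈ Im(Φ)` and `u ∈ dom(Φ)` with `0 < dist_𝓛(b, Φ(u)) < ∞` and
`dist(u, Φ⁻¹(b)) = H(Φ|𝓛) · dist_𝓛(b, Φ(u))`.  Finiteness of
`dist_𝓛(b, Φ(u))` is rendered as nonemptiness of `{y ∈ Φ(u) : b - y ∈ 𝓛}`. -/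
theorem hoffman_bound_tight {n m : ℕ} (Φ : (Fin n → ℝ) → Set (Fin m → ℝ))
    (hK : IsPolyhedralCone (svGraph Φ)) (L : Submodule ℝ (Fin m → ℝ))
    (hH : 0 < HoffSV Φ L) :
    ∃ b : Fin m → ℝ, (∃ x, b ∈ Φ x) ∧
      ∃ u : Fin n → ℝ, (Φ u).Nonempty ∧
        {y | y ∈ Φ u ∧ b - y ∈ L}.Nonempty ∧
        0 < sInf {r | ∃ y ∈ Φ u, b - y ∈ L ∧ r = ‖b - y‖} ∧
        infDist u {x | b ∈ Φ x} =
          HoffSV Φ L * sInf {r | ∃ y ∈ Φ u, b - y ∈ L ∧ r = ‖b - y‖} := by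
  classical
  obtain ⟨k, f, hKeq⟩ := hK
  set H := HoffSV Φ L with hHdef
  -- step 1: the outer sup is attained
  set S : Set ℝ := {t | ∃ T ∈ tangentCones (svGraph Φ), RelSurjGraph T ∧ t = nrmInvRes T L}
    with hSdef
  have hSsup : H = sSup S := rfl
  have hSfin : S.Finite := by
    have htc : (tangentCones (svGraph Φ)).Finite := by
      have hsub : tangentCones (svGraph Φ) ⊆
          Set.range (fun Ix : Set (Fin k) => {z | ∀ i ∈ Ix, 0 ≤ f i z}) := by
        rintro T ⟨p, hpK, rfl⟩
        refine ⟨{i | f i p = 0}, ?_⟩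
        have hp : ∀ i, 0 ≤ f i p := by rw [hKeq] at hpK; exact hpK
        rw [hKeq, tangChar f hp]
        rfl
      exact (Set.finite_range _).subset hsub
    have : S ⊆ (fun T => nrmInvRes T L) '' tangentCones (svGraph Φ) := by
      rintro t ⟨T, hT, -, rfl⟩
      exact ⟨T, hT, rfl⟩
    exact (htc.image _).subset this
  have hSne : S.Nonempty := by
    by_contra h
    rw [Set.not_nonempty_iff_eq_empty] at h
    rw [hSsup, h, Real.sSup_empty] at hH
    exact lt_irrefl 0 hH
  have hmem := hSne.csSup_mem hSfin
  rw [← hSsup] at hmem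
  obtain ⟨T, hTtc, hTRS, hTH⟩ := hmem
  obtain ⟨p, hpK, hTdef⟩ := hTtc
  obtain ⟨W, hW⟩ := hTRS
  have hWiff : ∀ y : Fin m → ℝ, (∃ x, (x, y) ∈ T) ↔ y ∈ W := fun y => Set.ext_iff.1 hW y
  have hp : ∀ i, 0 ≤ f i p := by rw [hKeq] at hpK; exact hpK
  have hTchar : T = {z | ∀ i, f i p = 0 → 0 ≤ f i z} := by
    rw [hTdef, hKeq, tangChar f hp]
  -- structural facts about T
  have hT0 : (0 : (Fin n → ℝ) × (Fin m → ℝ)) ∈ T := by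
    rw [hTchar]; intro i _; simp
  have hTadd : ∀ z1 ∈ T, ∀ z2 ∈ T, z1 + z2 ∈ T := by
    intro z1 h1 z2 h2
    rw [hTchar] at h1 h2 ⊢
    intro i hi
    have := h1 i hi; have := h2 i hi
    simp only [map_add]
    linarith
  have hTsmul : ∀ (c : ℝ), 0 ≤ c → ∀ z ∈ T, c • z ∈ T := by
    intro c hc z hz
    rw [hTchar] at hz ⊢
    intro i hi
    have := hz i hi
    simp only [map_smul, smul_eq_mul]
    positivity
  have hTclosed : IsClosed T := by
    rw [hTchar]
    have : {z : (Fin n → ℝ) × (Fin m → ℝ) | ∀ i, f i p = 0 → 0 ≤ f i z} =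
        ⋂ i, {z | f i p = 0 → 0 ≤ f i z} := by
      ext z; simp [Set.mem_iInter]
    rw [this]
    refine isClosed_iInter (fun i => ?_)
    by_cases h : f i p = 0
    · have : {z : (Fin n → ℝ) × (Fin m → ℝ) | f i p = 0 → 0 ≤ f i z} =
          {z | 0 ≤ f i z} := by ext z; simp [h]
      rw [this]
      exact isClosed_le continuous_const (f i).continuous_of_finiteDimensional
    · have : {z : (Fin n → ℝ) × (Fin m → ℝ) | f i p = 0 → 0 ≤ f i z} = Set.univ := by
        ext z; simp [h]
      rw [this]; exact isClosed_univ
  -- step 2: the inner sup is attained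
  set A : Set ℝ := {t | ∃ y : Fin m → ℝ, (∃ x, (x, y) ∈ T) ∧ y ∈ L ∧ ‖y‖ ≤ 1 ∧
    t = dfun T y} with hAdef
  have hAsup : sSup A = H := hTH.symm
  have hAne : A.Nonempty := by
    by_contra h
    rw [Set.not_nonempty_iff_eq_empty] at h
    rw [hHdef] at hH
    rw [h, Real.sSup_empty] at hAsup
    linarith
  have hAbdd : BddAbove A := by
    by_contra h
    rw [Real.sSup_of_not_bddAbove h] at hAsup
    linarith
  have hAub : ∀ t ∈ A, t ≤ H := fun t ht => hAsup ▸ le_csSup hAbdd ht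
  -- d is bounded by H on W ∩ L
  have hdbound : ∀ y : Fin m → ℝ, y ∈ W → y ∈ L → dfun T y ≤ H * ‖y‖ := by
    intro y hyW hyL
    by_cases hy0 : y = 0
    · subst hy0
      have : dfun T 0 ≤ ‖(0 : Fin n → ℝ)‖ := dfun_le (by exact hT0)
      simpa using this
    · have hny : 0 < ‖y‖ := norm_pos_iff.2 hy0
      set y0 := ‖y‖⁻¹ • y with hy0def
      have hy0W : y0 ∈ W := W.smul_mem _ hyW
      have hy0L : y0 ∈ L := L.smul_mem _ hyL
      have hny0 : ‖y0‖ = 1 := by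
        rw [hy0def, norm_smul, Real.norm_eq_abs, abs_of_pos (inv_pos.2 hny)]
        field_simp
      have hd0 : dfun T y0 ≤ H := by
        refine hAub _ ⟨y0, (hWiff y0).2 hy0W, hy0L, le_of_eq hny0, rfl⟩
      have hyeq : y = ‖y‖ • y0 := by rw [hy0def, smul_smul]; field_simp; rw [one_smul]
      calc dfun T y = dfun T (‖y‖ • y0) := by rw [← hyeq]
        _ ≤ ‖y‖ * dfun T y0 := dfun_smul_le hTsmul ((hWiff y0).2 hy0W) hny
        _ ≤ ‖y‖ * H := by nlinarith [dfun_nonneg T y0]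
        _ = H * ‖y‖ := mul_comm _ _
  -- step 3: maximize d over the compact set Cb
  set Cb : Set (Fin m → ℝ) := {y | y ∈ W ∧ y ∈ L ∧ ‖y‖ ≤ 1} with hCbdef
  have hCbne : Cb.Nonempty := ⟨0, W.zero_mem, L.zero_mem, by simp⟩
  have hCbsub : Cb ⊆ closedBall 0 1 := fun y hy => by
    rw [mem_closedBall_zero_iff]; exact hy.2.2
  have hCbclosed : IsClosed Cb := by
    have : Cb = ((W : Set (Fin m → ℝ)) ∩ (L : Set (Fin m → ℝ))) ∩ closedBall 0 1 := by
      ext y; simp [hCbdef, mem_closedBall_zero_iff, and_assoc]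
    rw [this]
    exact (W.closed_of_finiteDimensional.inter L.closed_of_finiteDimensional).inter
      isClosed_closedBall
  have hCbcompact : IsCompact Cb :=
    (isCompact_closedBall (0 : Fin m → ℝ) 1).of_isClosed_subset hCbclosed hCbsub
  have hlip : LipschitzOnWith (Real.toNNReal H) (dfun T) Cb := by
    refine LipschitzOnWith.of_dist_le' (fun y1 hy1 y2 hy2 => ?_)
    have key : ∀ a b : Fin m → ℝ, a ∈ Cb → b ∈ Cb →
        dfun T a - dfun T b ≤ H * ‖a - b‖ := by
      intro a b ha hb
      have hab : a - b ∈ W := W.sub_mem ha.1 hb.1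
      have habL : a - b ∈ L := L.sub_mem ha.2.1 hb.2.1
      have h1 : dfun T a ≤ dfun T b + dfun T (a - b) := by
        have := dfun_add_le hTadd ((hWiff b).2 hb.1) ((hWiff (a-b)).2 hab)
        simpa using this
      have h2 : dfun T (a - b) ≤ H * ‖a - b‖ := hdbound _ hab habL
      linarith
    rw [Real.dist_eq, dist_eq_norm]
    rw [abs_sub_le_iff]
    constructor
    · exact (key y1 y2 hy1 hy2).trans (by rfl)
    · have := key y2 y1 hy2 hy1
      rwa [norm_sub_rev] at this
  have hcont : ContinuousOn (dfun T) Cb := hlip.continuousOn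
  obtain ⟨ybar, hybarCb, hybarmax⟩ := hCbcompact.exists_isMaxOn hCbne hcont
  have hybarW : ybar ∈ W := hybarCb.1
  have hybarL : ybar ∈ L := hybarCb.2.1
  have hdybar : dfun T ybar = H := by
    refine le_antisymm (hAub _ ⟨ybar, (hWiff ybar).2 hybarW, hybarL, hybarCb.2.2, rfl⟩) ?_
    rw [← hAsup]
    refine csSup_le hAne ?_
    rintro t ⟨y, hyT, hyL, hy1, rfl⟩
    exact hybarmax ⟨(hWiff y).1 hyT, hyL, hy1⟩
  -- step 4: minimal norm preimage xbar of ybar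
  have hPne : ∃ x, (x, ybar) ∈ T := (hWiff ybar).2 hybarW
  have hPclosed : IsClosed {x : Fin n → ℝ | (x, ybar) ∈ T} :=
    hTclosed.preimage (continuous_id.prodMk continuous_const)
  obtain ⟨x1, hx1T, hx1n⟩ : ∃ x, (x, ybar) ∈ T ∧ ‖x‖ < dfun T ybar + 1 := by
    have hlt : dfun T ybar < dfun T ybar + 1 := by linarith
    obtain ⟨x0, hx0⟩ := hPne
    obtain ⟨r, hr, hrlt⟩ := exists_lt_of_csInf_lt (s := {r | ∃ x : Fin n → ℝ,
      (x, ybar) ∈ T ∧ r = ‖x‖}) ⟨‖x0‖, x0, hx0, rfl⟩ hlt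
    obtain ⟨x, hx, rfl⟩ := hr
    exact ⟨x, hx, hrlt⟩
  set c : ℝ := dfun T ybar + 1 with hcdef
  set P' : Set (Fin n → ℝ) := {x | (x, ybar) ∈ T} ∩ closedBall 0 c with hP'def
  have hP'compact : IsCompact P' :=
    (isCompact_closedBall (0 : Fin n → ℝ) c).of_isClosed_subset
      (hPclosed.inter isClosed_closedBall) Set.inter_subset_right
  have hP'ne : P'.Nonempty := ⟨x1, hx1T, mem_closedBall_zero_iff.2 hx1n.le⟩
  obtain ⟨xbar, hxbarP', hxbarmin⟩ := hP'compact.exists_isMinOn hP'ne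
    continuous_norm.continuousOn
  have hxbarT : (xbar, ybar) ∈ T := hxbarP'.1
  have hxbarglobal : ∀ x : Fin n → ℝ, (x, ybar) ∈ T → ‖xbar‖ ≤ ‖x‖ := by
    intro x hx
    by_cases hxc : ‖x‖ ≤ c
    · exact hxbarmin ⟨hx, mem_closedBall_zero_iff.2 hxc⟩
    · have : ‖xbar‖ ≤ c := mem_closedBall_zero_iff.1 hxbarP'.2
      linarith
  have hxbarnorm : ‖xbar‖ = H := by
    rw [← hdybar]
    exact le_antisymm (le_dfun hPne hxbarglobal) (dfun_le hxbarT)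
  -- the e-claim
  have hec : ∀ w : Fin m → ℝ, ((0 : Fin n → ℝ), w) ∈ T → ybar - w ∈ L → 1 ≤ ‖ybar - w‖ := by
    intro w hwT hwL
    have hwW : w ∈ W := (hWiff w).1 ⟨0, hwT⟩
    have hy'W : ybar - w ∈ W := W.sub_mem hybarW hwW
    have hd1 : dfun T ybar ≤ dfun T (ybar - w) := by
      refine le_dfun ((hWiff _).2 hy'W) (fun x hx => ?_)
      have hmem : (x, ybar) ∈ T := by
        have := hTadd (x, ybar - w) hx ((0 : Fin n → ℝ), w) hwT
        simpa [Prod.mk_add_mk] using this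
      exact dfun_le hmem
    have hd2 : dfun T (ybar - w) ≤ H * ‖ybar - w‖ := hdbound _ hy'W hwL
    rw [hdybar] at hd1
    have hHpos : 0 < H := hH
    nlinarith
  have hybar1 : ‖ybar‖ = 1 := by
    refine le_antisymm hybarCb.2.2 ?_
    have := hec 0 (by exact hT0) (by simpa using hybarL)
    simpa using this
  -- step 5: obtain the scaling s with p + s • (xbar, ybar) in the graph
  have hxyT : (xbar, ybar) ∈ T := hxbarT
  rw [hTdef] at hxyT
  obtain ⟨s, hs, hsK⟩ := hxyT
  have hsplit : p + s • ((xbar, ybar) : (Fin n → ℝ) × (Fin m → ℝ)) =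
      (p.1 + s • xbar, p.2 + s • ybar) := by
    ext <;> simp
  rw [hsplit] at hsK
  have hbmem : p.2 + s • ybar ∈ Φ (p.1 + s • xbar) := hsK
  -- the witnesses
  set b : Fin m → ℝ := p.2 + s • ybar with hbdef
  set R : Set ℝ := {r | ∃ y ∈ Φ p.1, b - y ∈ L ∧ r = ‖b - y‖} with hRdef
  have hRmem : s ∈ R := by
    refine ⟨p.2, hpK, by simpa [hbdef] using L.smul_mem s hybarL, ?_⟩
    rw [show b - p.2 = s • ybar by rw [hbdef]; abel]
    rw [norm_smul, Real.norm_eq_abs, abs_of_pos hs, hybar1, mul_one]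
  have hRlb : ∀ r ∈ R, s ≤ r := by
    rintro r ⟨y, hyΦ, hyL, rfl⟩
    have hzT : ((0 : Fin n → ℝ), y - p.2) ∈ T := by
      rw [hTdef]
      refine ⟨1, one_pos, ?_⟩
      have heq1 : p + (1:ℝ) • (((0 : Fin n → ℝ), y - p.2) :
          (Fin n → ℝ) × (Fin m → ℝ)) = (p.1, y) := by
        ext <;> simp
      rw [heq1]
      exact hyΦ
    have hwT : ((0 : Fin n → ℝ), s⁻¹ • (y - p.2)) ∈ T := by
      have := hTsmul s⁻¹ (inv_nonneg.2 hs.le) _ hzT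
      simpa using this
    have hwL : ybar - s⁻¹ • (y - p.2) ∈ L := by
      have heq : ybar - s⁻¹ • (y - p.2) = s⁻¹ • (b - y) := by
        rw [hbdef]; match_scalars <;> field_simp
      rw [heq]
      exact L.smul_mem _ hyL
    have h1 := hec _ hwT hwL
    have heq2 : s • (ybar - s⁻¹ • (y - p.2)) = b - y := by
      rw [hbdef]; match_scalars <;> field_simp
    calc s = s * 1 := (mul_one s).symm
      _ ≤ s * ‖ybar - s⁻¹ • (y - p.2)‖ := by nlinarith
      _ = ‖s • (ybar - s⁻¹ • (y - p.2))‖ := by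
          rw [norm_smul, Real.norm_eq_abs, abs_of_pos hs]
      _ = ‖b - y‖ := by rw [heq2]
  have hRinf : sInf R = s := by
    refine le_antisymm (csInf_le ⟨0, ?_⟩ hRmem) (le_csInf ⟨s, hRmem⟩ hRlb)
    rintro r ⟨y, -, -, rfl⟩
    exact norm_nonneg _
  -- the distance equality
  have hSbne : ({x | b ∈ Φ x} : Set (Fin n → ℝ)).Nonempty := ⟨p.1 + s • xbar, hbmem⟩
  have hub : infDist p.1 {x | b ∈ Φ x} ≤ H * s := by
    have h1 : infDist p.1 {x | b ∈ Φ x} ≤ dist p.1 (p.1 + s • xbar) :=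
      infDist_le_dist_of_mem hbmem
    have h2 : dist p.1 (p.1 + s • xbar) = s * ‖xbar‖ := by
      rw [dist_eq_norm]
      rw [show p.1 - (p.1 + s • xbar) = -(s • xbar) by abel]
      rw [norm_neg, norm_smul, Real.norm_eq_abs, abs_of_pos hs]
    rw [h2, hxbarnorm] at h1
    linarith
  have hlb : ∀ x ∈ {x : Fin n → ℝ | b ∈ Φ x}, H * s ≤ dist p.1 x := by
    intro x hx
    have hzT : ((x - p.1, s • ybar) : (Fin n → ℝ) × (Fin m → ℝ)) ∈ T := by
      rw [hTdef]
      refine ⟨1, one_pos, ?_⟩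
      have heq1 : p + (1:ℝ) • (((x - p.1, s • ybar)) :
          (Fin n → ℝ) × (Fin m → ℝ)) = (x, b) := by
        rw [hbdef]; ext <;> simp
      rw [heq1]
      exact hx
    have hzT2 : ((s⁻¹ • (x - p.1), ybar) : (Fin n → ℝ) × (Fin m → ℝ)) ∈ T := by
      have h := hTsmul s⁻¹ (inv_nonneg.2 hs.le) _ hzT
      have heq : s⁻¹ • (((x - p.1, s • ybar)) : (Fin n → ℝ) × (Fin m → ℝ)) =
          (s⁻¹ • (x - p.1), ybar) := by
        have : s⁻¹ • (s • ybar) = ybar := by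
          rw [smul_smul, inv_mul_cancel₀ hs.ne', one_smul]
        rw [Prod.smul_mk, this]
      rwa [heq] at h
    have hd := dfun_le hzT2
    rw [hdybar] at hd
    have hnrm : ‖s⁻¹ • (x - p.1)‖ = s⁻¹ * ‖x - p.1‖ := by
      rw [norm_smul, Real.norm_eq_abs, abs_of_pos (inv_pos.2 hs)]
    rw [hnrm] at hd
    have hxp : dist p.1 x = ‖x - p.1‖ := by rw [dist_eq_norm, norm_sub_rev]
    rw [hxp]
    calc H * s = s * H := mul_comm _ _
      _ ≤ s * (s⁻¹ * ‖x - p.1‖) := by nlinarith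
      _ = ‖x - p.1‖ := by rw [← mul_assoc, mul_inv_cancel₀ hs.ne', one_mul]
  have hlb' : H * s ≤ infDist p.1 {x | b ∈ Φ x} := by
    by_contra hcon
    push_neg at hcon
    obtain ⟨x, hx, hdx⟩ := (infDist_lt_iff hSbne).1 hcon
    exact absurd hdx (not_lt.2 (hlb x hx))
  refine ⟨b, ⟨p.1 + s • xbar, hbmem⟩, p.1, ⟨p.2, hpK⟩, ?_, ?_, ?_⟩
  · exact ⟨p.2, hpK, by simpa [hbdef] using L.smul_mem s hybarL⟩
  · rw [hRinf]; exact hs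
  · rw [hRinf]
    exact le_antisymm hub hlb'
end

section
/- Let A ∈ ℝ^{m×n}. For all b ∈ ℝ^m such that P_{A,b} := {x ∈ ℝ^n : Ax ≤ b} is nonempty and all u ∈ ℝ^n, dist(u, P_{A,b}) ≤ H(A) · dist(b, Au + ℝ^m_+) ≤ H(A) · ‖(Au−b)_+‖. -/
open Matrix Metric

/-- `J ⊆ {1,…,m}` is `A`-surjective: `A_J ℝ^n + ℝ^J_+ = ℝ^J`. -/
def ASurj {m n : ℕ} (A : Matrix (Fin m) (Fin n) ℝ) (J : Set (Fin m)) : Prop :=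
  ∀ w : Fin m → ℝ, ∃ x : Fin n → ℝ, ∀ i ∈ J, A.mulVec x i ≤ w i

/-- `H_J(A) = max_{‖v‖ ≤ 1} min{‖x‖ : A_J x ≤ v_J}` (which is `0` for `J = ∅`). -/
noncomputable def HJ {m n : ℕ} (A : Matrix (Fin m) (Fin n) ℝ) (J : Set (Fin m)) : ℝ :=
  sSup {t | ∃ v : Fin m → ℝ, ‖v‖ ≤ 1 ∧
    t = sInf {r | ∃ x : Fin n → ℝ, (∀ i ∈ J, A.mulVec x i ≤ v i) ∧ r = ‖x‖}}

/-- The Hoffman constant `H(A) = max_{J ∈ S(A)} H_J(A)`. -/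
noncomputable def HoffA {m n : ℕ} (A : Matrix (Fin m) (Fin n) ℝ) : ℝ :=
  sSup {t | ∃ J : Set (Fin m), ASurj A J ∧ t = HJ A J}

/-- The dual norm `‖v‖* = max_{‖x‖ ≤ 1} ⟨v, x⟩`. -/
noncomputable def dualNorm {d : ℕ} (v : Fin d → ℝ) : ℝ :=
  sSup {t | ∃ x : Fin d → ℝ, ‖x‖ ≤ 1 ∧ t = ∑ i, v i * x i}


open Finset

section Carath
variable {E : Type*} [AddCommGroup E] [Module ℝ E]

lemma carath {k : ℕ} (v : Fin k → E) (s : Finset (Fin k)) :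
    ∀ (l : Fin k → ℝ), (∀ i, 0 ≤ l i) → (∀ i ∉ s, l i = 0) →
    ∃ (s' : Finset (Fin k)) (l' : Fin k → ℝ), LinearIndependent ℝ (fun i : s' => v i) ∧
      (∀ i, 0 ≤ l' i) ∧ (∀ i ∉ s', l' i = 0) ∧ ∑ i, l' i • v i = ∑ i, l i • v i := by
  induction s using Finset.strongInduction with
  | _ s ih =>
    intro l hl hsupp
    by_cases hli : LinearIndependent ℝ (fun i : s => v i)
    · exact ⟨s, l, hli, hl, hsupp, rfl⟩
    obtain ⟨g, hg0, i₀, hgi₀⟩ := Fintype.not_linearIndependent_iff.1 hli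
    set gh : Fin k → ℝ := fun i => if h : i ∈ s then g ⟨i, h⟩ else 0 with hgh
    have ghsum : ∑ i, gh i • v i = 0 := by
      rw [← Finset.sum_subset (Finset.subset_univ s)
        (by intro i _ hi; simp [hgh, dif_neg hi])]
      rw [← Finset.sum_attach s (fun i => gh i • v i)]
      rw [← hg0]
      exact Finset.sum_congr rfl fun i _ => by simp [hgh, i.2]
    have ghsupp : ∀ i ∉ s, gh i = 0 := fun i hi => by simp [hgh, dif_neg hi]
    -- get a g' with a positive entry
    obtain ⟨g', hg'sum, hg'supp, j₀, hj₀⟩ :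
        ∃ g' : Fin k → ℝ, (∑ i, g' i • v i = 0) ∧ (∀ i ∉ s, g' i = 0) ∧ ∃ j, 0 < g' j := by
      by_cases H : ∃ j, 0 < gh j
      · exact ⟨gh, ghsum, ghsupp, H⟩
      · push_neg at H
        refine ⟨-gh, by simpa using ghsum, fun i hi => by simp [ghsupp i hi], ⟨i₀, ?_⟩⟩
        have h1 : gh i₀ ≠ 0 := by simpa [hgh, dif_pos i₀.2] using hgi₀
        have := H i₀
        simp only [Pi.neg_apply]
        cases' lt_or_eq_of_le (H i₀) with h h
        · linarith
        · exact absurd h h1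
    clear hgi₀ hg0 ghsum ghsupp hli
    set T : Finset (Fin k) := univ.filter (fun i => 0 < g' i) with hT
    have hTne : T.Nonempty := ⟨j₀, by simp [hT, hj₀]⟩
    obtain ⟨i₁, hi₁T, hi₁min⟩ := Finset.exists_min_image T (fun i => l i / g' i) hTne
    have hgi₁ : 0 < g' i₁ := by simpa [hT] using hi₁T
    have hi₁s : i₁ ∈ s := by
      by_contra h; exact absurd (hg'supp i₁ h) (ne_of_gt hgi₁)
    set t : ℝ := l i₁ / g' i₁ with ht
    have ht0 : 0 ≤ t := div_nonneg (hl i₁) hgi₁.le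
    set l' : Fin k → ℝ := fun i => l i - t * g' i with hl'
    have hl'0 : ∀ i, 0 ≤ l' i := by
      intro i
      by_cases h : 0 < g' i
      · have := hi₁min i (by simp [hT, h])
        have : t * g' i ≤ l i := by
          rw [ht, div_le_div_iff₀ hgi₁ h] at *
          calc l i₁ / g' i₁ * g' i ≤ l i / g' i * g' i := by
                apply mul_le_mul_of_nonneg_right _ h.le
                exact hi₁min i (by simp [hT, h])
          _ = l i := by field_simp
        simp [hl']; linarith
      · push_neg at h
        have : t * g' i ≤ 0 := mul_nonpos_of_nonneg_of_nonpos ht0 h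
        have := hl i
        simp [hl']; linarith
    have hl'supp : ∀ i ∉ s.erase i₁, l' i = 0 := by
      intro i hi
      by_cases his : i ∈ s
      · have : i = i₁ := by
          by_contra h; exact hi (Finset.mem_erase.2 ⟨h, his⟩)
        subst this
        have : g' i ≠ 0 := ne_of_gt hgi₁
        simp only [hl', ht]; field_simp; ring
      · simp [hl', hsupp i his, hg'supp i his]
    have hsum : ∑ i, l' i • v i = ∑ i, l i • v i := by
      have : ∀ i, l' i • v i = l i • v i - (t * g' i) • v i := by
        intro i; simp [hl', sub_smul]
      rw [Finset.sum_congr rfl fun i _ => this i, Finset.sum_sub_distrib]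
      have : ∑ i, (t * g' i) • v i = t • ∑ i, g' i • v i := by
        rw [Finset.smul_sum]; exact Finset.sum_congr rfl fun i _ => by rw [smul_smul]
      rw [this, hg'sum, smul_zero, sub_zero]
    obtain ⟨s2, l2, h1, h2, h3, h4⟩ :=
      ih (s.erase i₁) (Finset.erase_ssubset hi₁s) l' hl'0 hl'supp
    exact ⟨s2, l2, h1, h2, h3, h4.trans hsum⟩

end Carath

open Finset

section Closed
variable {E : Type*} [NormedAddCommGroup E] [NormedSpace ℝ E]

lemma extend_sum {k : ℕ} (s : Finset (Fin k)) (g : {i // i ∈ s} → ℝ) (f : Fin k → E) :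
    ∑ i : {i // i ∈ s}, g i • f i = ∑ i, (if h : i ∈ s then g ⟨i, h⟩ else 0) • f i := by
  rw [← Finset.sum_subset (Finset.subset_univ s)
      (by intro i _ hi; rw [dif_neg hi, zero_smul]),
    ← Finset.sum_attach s (fun i => (if h : i ∈ s then g ⟨i, h⟩ else 0) • f i)]
  exact Finset.sum_congr rfl fun i _ => by rw [dif_pos i.2]

lemma isClosed_coneSet {k : ℕ} (v : Fin k → E) :
    IsClosed {x : E | ∃ l : Fin k → ℝ, (∀ i, 0 ≤ l i) ∧ x = ∑ i, l i • v i} := by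
  classical
  have key : ∀ s : Finset (Fin k), LinearIndependent ℝ (fun i : s => v i) →
      IsClosed ((fun l : {i // i ∈ s} → ℝ => ∑ i : {i // i ∈ s}, l i • v i) ''
        {l | ∀ i, 0 ≤ l i}) := by
    intro s hs
    set φ : ({i // i ∈ s} → ℝ) →ₗ[ℝ] E :=
      { toFun := fun l => ∑ i : {i // i ∈ s}, l i • v i
        map_add' := by
          intro a b
          simp [add_smul, Finset.sum_add_distrib]
        map_smul' := by
          intro c a
          simp [Finset.smul_sum, smul_smul] } with hφ
    have hker : LinearMap.ker φ = ⊥ := by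
      rw [LinearMap.ker_eq_bot']
      intro g hg
      have := Fintype.linearIndependent_iff.1 hs g hg
      funext i; exact this i
    have hce := LinearMap.isClosedEmbedding_of_injective (f := φ) hker
    have horth : IsClosed {l : {i // i ∈ s} → ℝ | ∀ i, 0 ≤ l i} := by
      have : {l : {i // i ∈ s} → ℝ | ∀ i, 0 ≤ l i} =
          Set.pi Set.univ (fun _ => Set.Ici (0:ℝ)) := by
        ext l
        simp only [Set.mem_setOf_eq, Set.mem_pi, Set.mem_univ, Set.mem_Ici, forall_const]
      rw [this]
      exact isClosed_set_pi fun i _ => isClosed_Ici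
    exact hce.isClosedMap _ horth
  have hunion : {x : E | ∃ l : Fin k → ℝ, (∀ i, 0 ≤ l i) ∧ x = ∑ i, l i • v i} =
      ⋃ (s : Finset (Fin k)) (_ : LinearIndependent ℝ (fun i : s => v i)),
        ((fun l : {i // i ∈ s} → ℝ => ∑ i : {i // i ∈ s}, l i • v i) '' {l | ∀ i, 0 ≤ l i}) := by
    ext x
    simp only [Set.mem_setOf_eq, Set.mem_iUnion, Set.mem_image]
    constructor
    · rintro ⟨l, hl, rfl⟩
      obtain ⟨s', l', hli, hl'0, hl'supp, hsum⟩ :=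
        carath v Finset.univ l hl (by simp)
      refine ⟨s', hli, fun i => l' i, fun i => hl'0 i, ?_⟩
      rw [extend_sum]
      rw [← hsum]
      congr 1
      funext i
      by_cases h : i ∈ s' <;> simp [h, hl'supp]
    · rintro ⟨s, hs, l, hl, rfl⟩
      refine ⟨fun i => if h : i ∈ s then l ⟨i, h⟩ else 0, ?_, ?_⟩
      · intro i; by_cases h : i ∈ s <;> simp [h]; exact hl _
      · rw [extend_sum]
  rw [hunion]
  exact isClosed_iUnion_of_finite fun s => isClosed_iUnion_of_finite fun hs => key s hs

end Closed
section Farkas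

open RealInnerProductSpace in
lemma farkas {N k : ℕ} (v : Fin k → (Fin N → ℝ)) (c : Fin N → ℝ)
    (h : ∀ y : Fin N → ℝ, (∀ i, ∑ j, v i j * y j ≤ 0) → ∑ j, c j * y j ≤ 0) :
    ∃ l : Fin k → ℝ, (∀ i, 0 ≤ l i) ∧ ∀ j, c j = ∑ i, l i * v i j := by
  classical
  set E := EuclideanSpace ℝ (Fin N)
  set V : Fin k → E := fun i => (WithLp.equiv 2 (Fin N → ℝ)).symm (v i) with hV
  set C : E := (WithLp.equiv 2 (Fin N → ℝ)).symm c with hC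
  set S : Set E := {x | ∃ l : Fin k → ℝ, (∀ i, 0 ≤ l i) ∧ x = ∑ i, l i • V i} with hS
  have hSapp : ∀ (l : Fin k → ℝ) (j : Fin N), (∑ i, l i • V i) j = ∑ i, l i * v i j := by
    intro l j
    rw [WithLp.ofLp_sum, Finset.sum_apply]
    rfl
  have hmem : ∀ i, V i ∈ S := by
    intro i
    refine ⟨fun i' => if i' = i then 1 else 0, fun i' => by positivity, ?_⟩
    simp only [ite_smul, one_smul, zero_smul, Finset.sum_ite_eq', Finset.mem_univ, if_pos]
  by_cases hc : C ∈ S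
  · obtain ⟨l, hl, hsum⟩ := hc
    exact ⟨l, hl, fun j => by rw [← hSapp l j, ← hsum]; rfl⟩
  · exfalso
    set K : ConvexCone ℝ E :=
      { carrier := S
        smul_mem' := by
          rintro t ht x ⟨l, hl, rfl⟩
          refine ⟨fun i => t * l i, fun i => mul_nonneg ht.le (hl i), ?_⟩
          rw [Finset.smul_sum]
          exact Finset.sum_congr rfl fun i _ => by dsimp only; rw [smul_smul]
        add_mem' := by
          rintro x ⟨l, hl, rfl⟩ y ⟨l', hl', rfl⟩
          exact ⟨fun i => l i + l' i, fun i => add_nonneg (hl i) (hl' i), by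
            rw [← Finset.sum_add_distrib]
            exact Finset.sum_congr rfl fun i _ => by dsimp only; rw [add_smul]⟩ } with hK
    have hKne : (K : Set E).Nonempty := ⟨0, ⟨fun _ => 0, fun _ => le_refl 0, by simp⟩⟩
    have hKcl : IsClosed (K : Set E) := isClosed_coneSet V
    obtain ⟨y, hy1, hy2⟩ : ∃ y : E, (∀ x ∈ S, 0 ≤ ⟪x, y⟫) ∧ ⟪y, C⟫ < 0 := by
      obtain ⟨y, h1, h2⟩ := ProperCone.hyperplane_separation'
        (C := ⟨K.toPointedCone (show (0:E) ∈ S from ⟨fun _ => 0, fun _ => le_refl 0, by simp⟩),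
          hKcl⟩) (x₀ := C) hc
      exact ⟨y, fun x hx => h1 x hx, by rw [real_inner_comm]; exact h2⟩
    have hinner : ∀ x : E, ⟪x, y⟫ = ∑ j, x j * y j := by
      intro x
      rw [PiLp.inner_apply]
      exact Finset.sum_congr rfl fun j _ => by simp [mul_comm]
    have hVij : ∀ i j, V i j = v i j := fun _ _ => rfl
    have hCj : ∀ j, C j = c j := fun _ => rfl
    have h1 : ∀ i, ∑ j, v i j * (-(y j)) ≤ 0 := by
      intro i
      have h0 := hy1 (V i) (hmem i)
      rw [hinner] at h0
      have he : ∑ j, v i j * (-(y j)) = -∑ j, V i j * y j := by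
        rw [← Finset.sum_neg_distrib]
        exact Finset.sum_congr rfl fun j _ => by rw [hVij]; ring
      rw [he]; linarith
    have h2' := h (fun j => -(y j)) h1
    have he2 : ∑ j, c j * (-(y j)) = -∑ j, C j * y j := by
      rw [← Finset.sum_neg_distrib]
      exact Finset.sum_congr rfl fun j _ => by rw [hCj]; ring
    rw [real_inner_comm, hinner] at hy2
    rw [he2] at h2'
    linarith

end Farkas
open Matrix Metric

lemma gordan {m n : ℕ} (A : Matrix (Fin m) (Fin n) ℝ) (J : Set (Fin m))
    (hJ : ¬ ASurj A J) :
    ∃ μ : Fin m → ℝ, (∀ i, 0 ≤ μ i) ∧ (∀ i, i ∉ J → μ i = 0) ∧ (∃ i, μ i ≠ 0) ∧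
      ∀ j, ∑ i, μ i * A i j = 0 := by
  classical
  rw [ASurj] at hJ
  push_neg at hJ
  obtain ⟨w, hw⟩ := hJ
  set V : Fin m → (Fin (n+1) → ℝ) :=
    fun i => if i ∈ J then Fin.snoc (A i) (-(w i)) else 0 with hV
  set c : Fin (n+1) → ℝ := Fin.snoc 0 1 with hc
  have hfar : ∀ y : Fin (n+1) → ℝ, (∀ i, ∑ j, V i j * y j ≤ 0) → ∑ j, c j * y j ≤ 0 := by
    intro y hy
    have hcy : ∑ j, c j * y j = y (Fin.last n) := by
      rw [Fin.sum_univ_castSucc]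
      simp [hc]
    rw [hcy]
    by_contra hpos
    push_neg at hpos
    set s := y (Fin.last n) with hs
    obtain ⟨i, hiJ, hgt⟩ := hw (fun j => y (Fin.castSucc j) / s)
    have hyi := hy i
    rw [hV] at hyi
    simp only [if_pos hiJ] at hyi
    rw [Fin.sum_univ_castSucc] at hyi
    simp only [Fin.snoc_castSucc, Fin.snoc_last] at hyi
    -- hyi : ∑ j, A i j * y (castSucc j) + (-(w i)) * s ≤ 0
    have hmv : A.mulVec (fun j => y (Fin.castSucc j) / s) i
        = (∑ j, A i j * y (Fin.castSucc j)) / s := by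
      simp only [Matrix.mulVec, dotProduct, Finset.sum_div]
      exact Finset.sum_congr rfl fun j _ => by ring
    rw [hmv] at hgt
    rw [lt_div_iff₀ hpos] at hgt
    rw [← hs] at hyi
    nlinarith
  obtain ⟨l, hl, hcl⟩ := farkas V c hfar
  set μ : Fin m → ℝ := fun i => if i ∈ J then l i else 0 with hμ
  have hμA : ∀ j, ∑ i, μ i * A i j = 0 := by
    intro j
    have := hcl (Fin.castSucc j)
    have hcj : c (Fin.castSucc j) = 0 := by simp [hc]
    rw [hcj] at this
    have h2 : ∑ i, μ i * A i j = ∑ i, l i * V i (Fin.castSucc j) :=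
      Finset.sum_congr rfl fun i _ => by
        by_cases h : i ∈ J <;> simp [hμ, hV, h]
    rw [h2, ← this]
  have hμw : ∑ i, μ i * (-(w i)) = 1 := by
    have := hcl (Fin.last n)
    have hcl' : c (Fin.last n) = 1 := by simp [hc]
    rw [hcl'] at this
    have h2 : ∑ i, μ i * (-(w i)) = ∑ i, l i * V i (Fin.last n) :=
      Finset.sum_congr rfl fun i _ => by
        by_cases h : i ∈ J <;> simp [hμ, hV, h]
    rw [h2, ← this]
  refine ⟨μ, fun i => by by_cases h : i ∈ J <;> simp [hμ, h, hl i], 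
    fun i hi => by simp [hμ, hi], ?_, hμA⟩
  by_contra hz
  push_neg at hz
  have : ∑ i, μ i * (-(w i)) = 0 := by
    refine Finset.sum_eq_zero fun i _ => by rw [hz i, zero_mul]
  rw [this] at hμw
  exact zero_ne_one hμw
section KKT

variable {m n : ℕ}

lemma continuous_mulVec_apply (A : Matrix (Fin m) (Fin n) ℝ) (i : Fin m) :
    Continuous fun x : Fin n → ℝ => A.mulVec x i := by
  simp only [Matrix.mulVec, dotProduct]
  exact continuous_finset_sum _ fun j _ => continuous_const.mul (continuous_apply j)

lemma isClosed_P (A : Matrix (Fin m) (Fin n) ℝ) (b : Fin m → ℝ) :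
    IsClosed {x : Fin n → ℝ | ∀ i, A.mulVec x i ≤ b i} := by
  have : {x : Fin n → ℝ | ∀ i, A.mulVec x i ≤ b i} =
      ⋂ i, {x : Fin n → ℝ | A.mulVec x i ≤ b i} := by
    ext x; simp
  rw [this]
  exact isClosed_iInter fun i =>
    isClosed_le (continuous_mulVec_apply A i) continuous_const

lemma convex_P (A : Matrix (Fin m) (Fin n) ℝ) (b : Fin m → ℝ) :
    Convex ℝ {x : Fin n → ℝ | ∀ i, A.mulVec x i ≤ b i} := by
  intro x hx y hy a a' ha ha' hab
  intro i
  have : A.mulVec (a • x + a' • y) i = a * A.mulVec x i + a' * A.mulVec y i := by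
    rw [Matrix.mulVec_add, Matrix.mulVec_smul, Matrix.mulVec_smul]
    rfl
  rw [this]
  calc a * A.mulVec x i + a' * A.mulVec y i ≤ a * b i + a' * b i :=
        add_le_add (mul_le_mul_of_nonneg_left (hx i) ha)
          (mul_le_mul_of_nonneg_left (hy i) ha')
    _ = b i := by rw [← add_mul, hab, one_mul]

/-- Separation: a norm-one functional minimized over `P` at the projection point. -/
lemma exists_sep (A : Matrix (Fin m) (Fin n) ℝ) (b : Fin m → ℝ)
    (hP : {x : Fin n → ℝ | ∀ i, A.mulVec x i ≤ b i}.Nonempty)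
    (u : Fin n → ℝ) (hu : u ∉ {x : Fin n → ℝ | ∀ i, A.mulVec x i ≤ b i}) :
    ∃ (F : (Fin n → ℝ) →L[ℝ] ℝ) (xb : Fin n → ℝ),
      (∀ i, A.mulVec xb i ≤ b i) ∧
      Metric.infDist u {x : Fin n → ℝ | ∀ i, A.mulVec x i ≤ b i} = dist u xb ∧
      ‖F‖ = 1 ∧ F (xb - u) = Metric.infDist u {x : Fin n → ℝ | ∀ i, A.mulVec x i ≤ b i} ∧
      ∀ z, (∀ i, A.mulVec z i ≤ b i) → F xb ≤ F z := by
  set P := {x : Fin n → ℝ | ∀ i, A.mulVec x i ≤ b i} with hPdef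
  have hPc : IsClosed P := isClosed_P A b
  have hPcv : Convex ℝ P := convex_P A b
  set d := Metric.infDist u P with hd
  have hd0 : 0 < d := (hPc.notMem_iff_infDist_pos hP).1 hu
  obtain ⟨xb, hxbP, hxbd⟩ := hPc.exists_infDist_eq_dist hP u
  have hdisj : Disjoint (Metric.ball u d) P := by
    rw [Set.disjoint_left]
    intro z hz hzP
    have h1 : d ≤ dist u z := Metric.infDist_le_dist_of_mem hzP
    rw [Metric.mem_ball, dist_comm] at hz
    linarith
  obtain ⟨f, c, hfb, hfP⟩ :=
    geometric_hahn_banach_open (convex_ball u d) Metric.isOpen_ball hPcv hdisj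
  have hfu : f u < c := hfb u (Metric.mem_ball_self hd0)
  have hfne : f ≠ 0 := by
    intro h
    obtain ⟨x₀, hx₀⟩ := hP
    have := hfP x₀ hx₀
    rw [h] at hfu this
    simp at hfu this
    linarith
  set r := c - f u with hr
  have hr0 : 0 < r := by simp [hr]; linarith
  -- ‖f‖ ≤ r / d
  have hball : ∀ w : Fin n → ℝ, ‖w‖ < d → |f w| ≤ r := by
    intro w hw
    have h1 : f (u + w) < c := hfb _ (by
      rw [Metric.mem_ball, dist_comm, dist_eq_norm]; simpa using hw)
    have h2 : f (u + -w) < c := hfb _ (by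
      rw [Metric.mem_ball, dist_comm, dist_eq_norm]; simpa using hw)
    rw [map_add] at h1 h2
    rw [map_neg] at h2
    rw [abs_le]
    constructor <;> [linarith; linarith]
  have hopn : ∀ w : Fin n → ℝ, d * |f w| ≤ r * ‖w‖ := by
    intro w
    refine le_of_forall_pos_le_add fun ε hε => ?_
    set ε' := ε / r with hε'
    have hε'0 : 0 < ε' := div_pos hε hr0
    have hnorm : ‖(d / (‖w‖ + ε')) • w‖ < d := by
      rw [norm_smul, Real.norm_eq_abs, abs_of_pos (div_pos hd0 (by positivity))]
      rw [div_mul_eq_mul_div, div_lt_iff₀ (by positivity)]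
      nlinarith [norm_nonneg w]
    have := hball _ hnorm
    rw [_root_.map_smul, smul_eq_mul, abs_mul, abs_of_pos (div_pos hd0 (by positivity))] at this
    rw [div_mul_eq_mul_div, div_le_iff₀ (by positivity)] at this
    calc d * |f w| ≤ r * (‖w‖ + ε') := by linarith
      _ = r * ‖w‖ + ε := by rw [mul_add, hε']; field_simp
  have hfnorm : ‖f‖ ≤ r / d := by
    refine ContinuousLinearMap.opNorm_le_bound f (by positivity) fun w => ?_
    rw [Real.norm_eq_abs, div_mul_eq_mul_div, le_div_iff₀ hd0, mul_comm (|f w|) d]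
    exact hopn w
  -- hence f u + d * ‖f‖ ≤ f z for z ∈ P
  have hkey : ∀ z ∈ P, f u + d * ‖f‖ ≤ f z := by
    intro z hz
    have := hfP z hz
    have : f u + d * ‖f‖ ≤ f u + d * (r / d) :=
      add_le_add_right (mul_le_mul_of_nonneg_left hfnorm hd0.le) _
    calc f u + d * ‖f‖ ≤ f u + d * (r / d) := this
      _ = c := by field_simp [hr]; rw [hr]; ring
      _ ≤ f z := hfP z hz
  set F : (Fin n → ℝ) →L[ℝ] ℝ := ‖f‖⁻¹ • f with hF
  have hfpos : 0 < ‖f‖ := norm_pos_iff.2 hfne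
  have hFnorm : ‖F‖ = 1 := by
    rw [hF, norm_smul (‖f‖⁻¹) f, norm_inv, norm_norm]
    exact inv_mul_cancel₀ (ne_of_gt hfpos)
  have hFkey : ∀ z ∈ P, F u + d ≤ F z := by
    intro z hz
    have := hkey z hz
    have h2 : ‖f‖⁻¹ * (f u + d * ‖f‖) ≤ ‖f‖⁻¹ * f z :=
      mul_le_mul_of_nonneg_left this (inv_nonneg.2 hfpos.le)
    rw [mul_add] at h2
    have h3 : ‖f‖⁻¹ * (d * ‖f‖) = d := by field_simp
    rw [h3] at h2
    exact h2
  have hFxb : F (xb - u) = d := by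
    have h1 : F u + d ≤ F xb := hFkey xb hxbP
    have h2 : F (xb - u) ≤ d := by
      calc F (xb - u) ≤ |F (xb - u)| := le_abs_self _
        _ ≤ ‖F‖ * ‖xb - u‖ := by rw [← Real.norm_eq_abs]; exact F.le_opNorm _
        _ = d := by rw [hFnorm, one_mul, ← dist_eq_norm, dist_comm, ← hxbd]
    rw [map_sub]
    rw [map_sub] at h2
    have h1' : F u + d ≤ F xb := h1
    linarith
  refine ⟨F, xb, hxbP, hxbd, hFnorm, hFxb, fun z hz => ?_⟩
  have h1 := hFkey z hz
  have h2 : F xb - F u = d := by rw [← map_sub]; exact hFxb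
  linarith
lemma exists_kkt {m n : ℕ} (A : Matrix (Fin m) (Fin n) ℝ) (b : Fin m → ℝ)
    (xb : Fin n → ℝ) (hxbP : ∀ i, A.mulVec xb i ≤ b i)
    (F : (Fin n → ℝ) →L[ℝ] ℝ)
    (hmin : ∀ z, (∀ i, A.mulVec z i ≤ b i) → F xb ≤ F z) :
    ∃ l : Fin m → ℝ, (∀ i, 0 ≤ l i) ∧ (∀ i, l i ≠ 0 → A.mulVec xb i = b i) ∧
      ∀ x, ∑ i, l i * A.mulVec x i = -F x := by
  classical
  set V : Fin m → (Fin n → ℝ) := fun i => if A.mulVec xb i = b i then A i else 0 with hV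
  set cv : Fin n → ℝ := fun j => -F (fun j' => if j = j' then 1 else 0) with hcv
  have hFsum : ∀ y : Fin n → ℝ, F y = ∑ j, y j * F (fun j' => if j = j' then 1 else 0) := by
    intro y
    conv_lhs => rw [pi_eq_sum_univ y]
    rw [map_sum]
    exact Finset.sum_congr rfl fun j _ => by rw [_root_.map_smul]; rfl
  have hfar : ∀ y : Fin n → ℝ, (∀ i, ∑ j, V i j * y j ≤ 0) → ∑ j, cv j * y j ≤ 0 := by
    intro y hy
    have hact : ∀ i, A.mulVec xb i = b i → A.mulVec y i ≤ 0 := by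
      intro i hi
      have h0 := hy i
      rw [hV] at h0
      simp only [if_pos hi] at h0
      simpa [Matrix.mulVec, dotProduct] using h0
    have hFy : 0 ≤ F y := by
      set T := Finset.univ.filter (fun i => ¬ (A.mulVec xb i = b i)) with hT
      set S := insert (1:ℝ)
        (T.image fun i => (b i - A.mulVec xb i)/(|A.mulVec y i| + 1)) with hS
      have hSne : S.Nonempty := ⟨1, Finset.mem_insert_self _ _⟩
      set t := S.min' hSne with ht
      have ht0 : 0 < t := by
        rw [ht, Finset.lt_min'_iff]
        intro v hv
        rcases Finset.mem_insert.1 hv with h | h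
        · rw [h]; norm_num
        · obtain ⟨i, hiT, rfl⟩ := Finset.mem_image.1 h
          have hne : A.mulVec xb i ≠ b i := by simpa [hT] using hiT
          have : A.mulVec xb i < b i := lt_of_le_of_ne (hxbP i) hne
          have : 0 < b i - A.mulVec xb i := by linarith
          positivity
      have hmvz : ∀ i, A.mulVec (xb + t • y) i = A.mulVec xb i + t * A.mulVec y i := by
        intro i
        rw [Matrix.mulVec_add, Matrix.mulVec_smul]
        rfl
      have hzP : ∀ i, A.mulVec (xb + t • y) i ≤ b i := by
        intro i
        rw [hmvz i]
        by_cases hi : A.mulVec xb i = b i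
        · have := hact i hi
          have h1 : t * A.mulVec y i ≤ 0 := mul_nonpos_of_nonneg_of_nonpos ht0.le this
          linarith
        · set δ := (b i - A.mulVec xb i)/(|A.mulVec y i| + 1) with hδ
          have hgap : 0 < b i - A.mulVec xb i :=
            sub_pos.2 (lt_of_le_of_ne (hxbP i) hi)
          have hδ0 : 0 < δ := by positivity
          have htle : t ≤ δ := Finset.min'_le _ _
            (Finset.mem_insert_of_mem (Finset.mem_image_of_mem _ (by simp [hT, hi])))
          have h6 : t * A.mulVec y i ≤ t * |A.mulVec y i| :=
            mul_le_mul_of_nonneg_left (le_abs_self _) ht0.le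
          have h7 : t * |A.mulVec y i| ≤ δ * |A.mulVec y i| :=
            mul_le_mul_of_nonneg_right htle (abs_nonneg _)
          have h9 : δ * |A.mulVec y i| ≤ δ * (|A.mulVec y i| + 1) :=
            mul_le_mul_of_nonneg_left (by linarith) hδ0.le
          have h8 : δ * (|A.mulVec y i| + 1) = b i - A.mulVec xb i := by
            rw [hδ]
            field_simp
          linarith
      have := hmin _ hzP
      rw [map_add, _root_.map_smul, smul_eq_mul] at this
      nlinarith
    have heq : ∑ j, cv j * y j = -F y := by
      rw [hFsum y, ← Finset.sum_neg_distrib]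
      exact Finset.sum_congr rfl fun j _ => by rw [hcv]; ring
    rw [heq]
    linarith
  obtain ⟨l0, hl0, hcl⟩ := farkas V cv hfar
  set l : Fin m → ℝ := fun i => if A.mulVec xb i = b i then l0 i else 0 with hl
  have hcol : ∀ j, ∑ i, l i * A i j = cv j := by
    intro j
    rw [hcl j]
    exact Finset.sum_congr rfl fun i _ => by
      by_cases h : A.mulVec xb i = b i <;> simp [hl, hV, h]
  refine ⟨l, fun i => by by_cases h : A.mulVec xb i = b i <;> simp [hl, h, hl0 i],
    fun i hi => by by_contra h; exact hi (by simp [hl, h]), fun x => ?_⟩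
  have hswap : ∑ i, l i * A.mulVec x i = ∑ j, (∑ i, l i * A i j) * x j := by
    simp only [Matrix.mulVec, dotProduct, Finset.mul_sum, Finset.sum_mul]
    rw [Finset.sum_comm]
    exact Finset.sum_congr rfl fun j _ => Finset.sum_congr rfl fun i _ => by ring
  rw [hswap]
  have : ∑ j, (∑ i, l i * A i j) * x j = ∑ j, cv j * x j :=
    Finset.sum_congr rfl fun j _ => by rw [hcol j]
  rw [this, hFsum x, ← Finset.sum_neg_distrib]
  exact Finset.sum_congr rfl fun j _ => by rw [hcv]; ring
lemma sum_swap_mulVec {m n : ℕ} (A : Matrix (Fin m) (Fin n) ℝ) (l : Fin m → ℝ)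
    (x : Fin n → ℝ) :
    ∑ i, l i * A.mulVec x i = ∑ j, (∑ i, l i * A i j) * x j := by
  simp only [Matrix.mulVec, dotProduct, Finset.mul_sum, Finset.sum_mul]
  rw [Finset.sum_comm]
  exact Finset.sum_congr rfl fun j _ => Finset.sum_congr rfl fun i _ => by ring

lemma reduce {m n : ℕ} (A : Matrix (Fin m) (Fin n) ℝ) (b : Fin m → ℝ)
    (xb : Fin n → ℝ) (F : (Fin n → ℝ) →L[ℝ] ℝ) :
    ∀ (N : ℕ) (l : Fin m → ℝ),
      (Finset.univ.filter (fun i => l i ≠ 0)).card = N →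
      (∀ i, 0 ≤ l i) → (∀ i, l i ≠ 0 → A.mulVec xb i = b i) →
      (∀ x, ∑ i, l i * A.mulVec x i = -F x) →
      ∃ l' : Fin m → ℝ, (∀ i, 0 ≤ l' i) ∧ (∀ i, l' i ≠ 0 → A.mulVec xb i = b i) ∧
        (∀ x, ∑ i, l' i * A.mulVec x i = -F x) ∧ ASurj A {i | l' i ≠ 0} := by
  classical
  intro N
  induction N using Nat.strong_induction_on with
  | _ N ih =>
    intro l hcard hl hact heq
    by_cases hsurj : ASurj A {i | l i ≠ 0}
    · exact ⟨l, hl, hact, heq, hsurj⟩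
    obtain ⟨μ, hμ0, hμsupp, ⟨i₂, hi₂⟩, hμA⟩ := gordan A _ hsurj
    set T := Finset.univ.filter (fun i => μ i ≠ 0) with hT
    have hTne : T.Nonempty := ⟨i₂, by simp [hT, hi₂]⟩
    obtain ⟨i₁, hi₁T, hmin⟩ := Finset.exists_min_image T (fun i => l i / μ i) hTne
    have hμi₁ne : μ i₁ ≠ 0 := by simpa [hT] using hi₁T
    have hμi₁ : 0 < μ i₁ := lt_of_le_of_ne (hμ0 i₁) (Ne.symm hμi₁ne)
    have hli₁ : l i₁ ≠ 0 := by
      intro h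
      exact hμi₁ne (hμsupp i₁ (by simp [h]))
    set t := l i₁ / μ i₁ with ht
    have ht0 : 0 ≤ t := div_nonneg (hl i₁) hμi₁.le
    set l' : Fin m → ℝ := fun i => l i - t * μ i with hl'
    have hl'0 : ∀ i, 0 ≤ l' i := by
      intro i
      by_cases h : μ i ≠ 0
      · have hμi : 0 < μ i := lt_of_le_of_ne (hμ0 i) (Ne.symm h)
        have h1 : t ≤ l i / μ i := hmin i (by simp [hT, h])
        have h2 : t * μ i ≤ l i / μ i * μ i := mul_le_mul_of_nonneg_right h1 hμi.le
        have h3 : l i / μ i * μ i = l i := by field_simp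
        simp only [hl']
        linarith
      · push_neg at h
        simp only [hl', h, mul_zero, sub_zero]
        exact hl i
    have hl'i₁ : l' i₁ = 0 := by
      simp only [hl', ht]
      field_simp
      ring
    have hsuppincl : ∀ i, l' i ≠ 0 → l i ≠ 0 := by
      intro i h
      by_contra hli
      have hμi : μ i = 0 := hμsupp i (by simp [hli])
      exact h (by simp [hl', hli, hμi])
    have hμmul : ∀ x : Fin n → ℝ, ∑ i, μ i * A.mulVec x i = 0 := by
      intro x
      rw [sum_swap_mulVec]
      exact Finset.sum_eq_zero fun j _ => by rw [hμA j, zero_mul]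
    have heq' : ∀ x, ∑ i, l' i * A.mulVec x i = -F x := by
      intro x
      have h1 : ∑ i, l' i * A.mulVec x i
          = ∑ i, l i * A.mulVec x i - t * ∑ i, μ i * A.mulVec x i := by
        rw [Finset.mul_sum, ← Finset.sum_sub_distrib]
        exact Finset.sum_congr rfl fun i _ => by simp only [hl']; ring
      rw [h1, hμmul, mul_zero, sub_zero, heq]
    have hsub : Finset.univ.filter (fun i => l' i ≠ 0) ⊆
        Finset.univ.filter (fun i => l i ≠ 0) := by
      intro i hi
      simp only [Finset.mem_filter, Finset.mem_univ, true_and] at *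
      exact hsuppincl i hi
    have hcard' : (Finset.univ.filter (fun i => l' i ≠ 0)).card < N := by
      rw [← hcard]
      apply Finset.card_lt_card
      rw [Finset.ssubset_iff_of_subset hsub]
      exact ⟨i₁, by simp [hli₁], by simp [hl'i₁]⟩
    exact ih _ hcard' l' rfl hl'0 (fun i hi => hact i (hsuppincl i hi)) heq'
section Hoff
variable {m n : ℕ} (A : Matrix (Fin m) (Fin n) ℝ)

lemma bddAbove_HoffA_set : BddAbove {t | ∃ J : Set (Fin m), ASurj A J ∧ t = HJ A J} := by
  apply Set.Finite.bddAbove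
  apply Set.Finite.subset (Set.finite_range (fun J : Set (Fin m) => HJ A J))
  rintro t ⟨J, _, rfl⟩
  exact ⟨J, rfl⟩

lemma ASurj_empty : ASurj A (∅ : Set (Fin m)) :=
  fun _ => ⟨0, fun i hi => absurd hi (Set.notMem_empty i)⟩

lemma HJ_empty : HJ A (∅ : Set (Fin m)) = 0 := by
  have hinner : ∀ v : Fin m → ℝ,
      sInf {r | ∃ x : Fin n → ℝ, (∀ i ∈ (∅ : Set (Fin m)), A.mulVec x i ≤ v i) ∧ r = ‖x‖}
        = 0 := by
    intro v
    have hlb : ∀ r ∈ {r | ∃ x : Fin n → ℝ,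
        (∀ i ∈ (∅ : Set (Fin m)), A.mulVec x i ≤ v i) ∧ r = ‖x‖}, (0:ℝ) ≤ r := by
      rintro r ⟨x, _, rfl⟩
      exact norm_nonneg x
    have hmem : (0:ℝ) ∈ {r | ∃ x : Fin n → ℝ,
        (∀ i ∈ (∅ : Set (Fin m)), A.mulVec x i ≤ v i) ∧ r = ‖x‖} :=
      ⟨0, fun i hi => absurd hi (Set.notMem_empty i), norm_zero.symm⟩
    exact le_antisymm (csInf_le ⟨0, hlb⟩ hmem) (le_csInf ⟨0, hmem⟩ hlb)
  have : {t | ∃ v : Fin m → ℝ, ‖v‖ ≤ 1 ∧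
      t = sInf {r | ∃ x : Fin n → ℝ, (∀ i ∈ (∅ : Set (Fin m)), A.mulVec x i ≤ v i) ∧ r = ‖x‖}}
      = {0} := by
    ext t
    simp only [Set.mem_setOf_eq, Set.mem_singleton_iff]
    constructor
    · rintro ⟨v, _, rfl⟩
      exact hinner v
    · rintro rfl
      exact ⟨0, by simp, (hinner 0).symm⟩
  rw [HJ, this, csSup_singleton]

lemma HoffA_nonneg : 0 ≤ HoffA A :=
  le_csSup (bddAbove_HoffA_set A) ⟨∅, ASurj_empty A, (HJ_empty A).symm⟩

lemma HJ_le_HoffA {J : Set (Fin m)} (h : ASurj A J) : HJ A J ≤ HoffA A :=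
  le_csSup (bddAbove_HoffA_set A) ⟨J, h, rfl⟩

lemma sInf_le_HJ {J : Set (Fin m)} (h : ASurj A J) (v : Fin m → ℝ) (hv : ‖v‖ ≤ 1) :
    sInf {r | ∃ x : Fin n → ℝ, (∀ i ∈ J, A.mulVec x i ≤ v i) ∧ r = ‖x‖} ≤ HJ A J := by
  refine le_csSup ?_ ⟨v, hv, rfl⟩
  obtain ⟨q, hq⟩ := h (fun _ => -1)
  refine ⟨‖q‖, ?_⟩
  rintro t ⟨w, hw, rfl⟩
  have hlb : ∀ r ∈ {r | ∃ x : Fin n → ℝ, (∀ i ∈ J, A.mulVec x i ≤ w i) ∧ r = ‖x‖},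
      (0:ℝ) ≤ r := by
    rintro r ⟨x, _, rfl⟩
    exact norm_nonneg x
  refine csInf_le ⟨0, hlb⟩ ⟨q, fun i hi => ?_, rfl⟩
  refine le_trans (hq i hi) ?_
  have h1 : ‖w i‖ ≤ ‖w‖ := norm_le_pi_norm w i
  rw [Real.norm_eq_abs] at h1
  have := abs_le.1 (h1.trans hw)
  linarith [this.1]

lemma infDist_eq_pospart (u : Fin n → ℝ) (b : Fin m → ℝ) :
    Metric.infDist b {y : Fin m → ℝ | ∃ s : Fin m → ℝ, (∀ i, 0 ≤ s i) ∧ y = A.mulVec u + s}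
      = ‖(fun i => max (A.mulVec u i - b i) 0 : Fin m → ℝ)‖ := by
  set g : Fin m → ℝ := fun i => max (A.mulVec u i - b i) 0 with hg
  set S := {y : Fin m → ℝ | ∃ s : Fin m → ℝ, (∀ i, 0 ≤ s i) ∧ y = A.mulVec u + s} with hS
  have hSne : S.Nonempty :=
    ⟨A.mulVec u, ⟨fun _ => 0, fun _ => le_refl 0, by funext i; simp⟩⟩
  apply le_antisymm
  · set s0 : Fin m → ℝ := fun i => max (b i - A.mulVec u i) 0 with hs0
    have hmem : A.mulVec u + s0 ∈ S := ⟨s0, fun i => le_max_right _ _, rfl⟩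
    refine le_trans (Metric.infDist_le_dist_of_mem hmem) ?_
    rw [dist_eq_norm]
    have heq : b - (A.mulVec u + s0) = -g := by
      funext i
      simp only [Pi.sub_apply, Pi.add_apply, Pi.neg_apply, hs0, hg]
      rcases le_total (A.mulVec u i) (b i) with h | h
      · rw [max_eq_left (by linarith), max_eq_right (by linarith)]
        ring
      · rw [max_eq_right (by linarith), max_eq_left (by linarith)]
        ring
    rw [heq, norm_neg]
  · rw [Metric.infDist_eq_iInf]
    have : Nonempty S := hSne.to_subtype
    refine le_ciInf fun ys => ?_
    obtain ⟨s, hs0, hy⟩ := ys.2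
    rw [dist_eq_norm, hy]
    refine (pi_norm_le_iff_of_nonneg (norm_nonneg _)).2 fun i => ?_
    rw [Real.norm_eq_abs, abs_of_nonneg (le_max_right _ _)]
    refine max_le ?_ (norm_nonneg _)
    have h1 : A.mulVec u i - b i ≤ -((b - (A.mulVec u + s)) i) := by
      simp only [Pi.sub_apply, Pi.add_apply]
      linarith [hs0 i]
    have h2 : -((b - (A.mulVec u + s)) i) ≤ |(b - (A.mulVec u + s)) i| := neg_le_abs _
    have h3 : |(b - (A.mulVec u + s)) i| ≤ ‖b - (A.mulVec u + s)‖ := by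
      rw [← Real.norm_eq_abs]
      exact norm_le_pi_norm _ i
    linarith

end Hoff

/-- Proposition 1, bound part: for all `b` with
`P_{A,b} = {x : Ax ≤ b} ≠ ∅` and all `u`,
`dist(u, P_{A,b}) ≤ H(A)·dist(b, Au + ℝ^m_+) ≤ H(A)·‖(Au − b)_+‖`. -/
theorem hoffman_ineq_bound {m n : ℕ} (A : Matrix (Fin m) (Fin n) ℝ)
    (b : Fin m → ℝ) (hP : {x : Fin n → ℝ | ∀ i, A.mulVec x i ≤ b i}.Nonempty)
    (u : Fin n → ℝ) :
    infDist u {x : Fin n → ℝ | ∀ i, A.mulVec x i ≤ b i} ≤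
      HoffA A * infDist b
        {y : Fin m → ℝ | ∃ s : Fin m → ℝ, (∀ i, 0 ≤ s i) ∧ y = A.mulVec u + s} ∧
    HoffA A * infDist b
        {y : Fin m → ℝ | ∃ s : Fin m → ℝ, (∀ i, 0 ≤ s i) ∧ y = A.mulVec u + s} ≤
      HoffA A * ‖(fun i => max (A.mulVec u i - b i) 0 : Fin m → ℝ)‖ := by
  classical
  set g : Fin m → ℝ := fun i => max (A.mulVec u i - b i) 0 with hg
  have hinf : Metric.infDist b
      {y : Fin m → ℝ | ∃ s : Fin m → ℝ, (∀ i, 0 ≤ s i) ∧ y = A.mulVec u + s} = ‖g‖ :=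
    infDist_eq_pospart A u b
  have hH0 : 0 ≤ HoffA A := HoffA_nonneg A
  refine ⟨?_, ?_⟩
  · rw [hinf]
    by_cases hu : u ∈ {x : Fin n → ℝ | ∀ i, A.mulVec x i ≤ b i}
    · rw [Metric.infDist_zero_of_mem hu]
      exact mul_nonneg hH0 (norm_nonneg g)
    obtain ⟨F, xb, hxbP, hxbd, hFnorm, hFxb, hmin⟩ := exists_sep A b hP u hu
    obtain ⟨l0, hl00, hl0act, hl0eq⟩ := exists_kkt A b xb hxbP F hmin
    obtain ⟨l, hl0, hlact, hleq, hlsurj⟩ := reduce A b xb F _ l0 rfl hl00 hl0act hl0eq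
    set J := {i : Fin m | l i ≠ 0} with hJ
    have hεpos : 0 < ‖g‖ := by
      simp only [Set.mem_setOf_eq, not_forall, not_le] at hu
      obtain ⟨i, hi⟩ := hu
      calc (0:ℝ) < A.mulVec u i - b i := by linarith
        _ ≤ g i := le_max_left _ _
        _ ≤ |g i| := le_abs_self _
        _ ≤ ‖g‖ := by rw [← Real.norm_eq_abs]; exact norm_le_pi_norm g i
    have hεne : ‖g‖ ≠ 0 := ne_of_gt hεpos
    have hd : Metric.infDist u {x : Fin n → ℝ | ∀ i, A.mulVec x i ≤ b i}
        = ∑ i, l i * (A.mulVec u i - b i) := by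
      have h1 : ∑ i, l i * (A.mulVec u i - b i)
          = ∑ i, l i * A.mulVec u i - ∑ i, l i * A.mulVec xb i := by
        rw [← Finset.sum_sub_distrib]
        refine Finset.sum_congr rfl fun i _ => ?_
        by_cases h : l i = 0
        · simp [h]
        · rw [hlact i h]; ring
      have h2 : ∑ i, l i * (A.mulVec u i - b i) = -F u - -F xb := by
        rw [h1, hleq u, hleq xb]
      have h3 : F xb - F u
          = Metric.infDist u {x : Fin n → ℝ | ∀ i, A.mulVec x i ≤ b i} := by
        rw [← hFxb, map_sub]
      linarith
    set v : Fin m → ℝ := fun i => -(g i) / ‖g‖ with hv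
    have hvnorm : ‖v‖ ≤ 1 := by
      refine (pi_norm_le_iff_of_nonneg zero_le_one).2 fun i => ?_
      rw [Real.norm_eq_abs]
      simp only [hv]
      rw [abs_div, abs_neg, abs_of_nonneg (le_max_right _ _ : (0:ℝ) ≤ g i), abs_norm]
      refine div_le_one_of_le₀ ?_ (norm_nonneg g)
      calc g i ≤ |g i| := le_abs_self _
        _ ≤ ‖g‖ := by rw [← Real.norm_eq_abs]; exact norm_le_pi_norm g i
    set Sv := {r | ∃ x : Fin n → ℝ, (∀ i ∈ J, A.mulVec x i ≤ v i) ∧ r = ‖x‖} with hSv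
    have hSvne : Sv.Nonempty := by
      obtain ⟨x, hx⟩ := hlsurj v
      exact ⟨‖x‖, x, hx, rfl⟩
    have hkey : ∑ i, l i * (A.mulVec u i - b i) ≤ ‖g‖ * sInf Sv := by
      have h2 : ∑ i, l i * (A.mulVec u i - b i) ≤ ∑ i, l i * g i :=
        Finset.sum_le_sum fun i _ => mul_le_mul_of_nonneg_left (le_max_left _ _) (hl0 i)
      have h3 : ∑ i, l i * g i = ‖g‖ * -∑ i, l i * v i := by
        rw [← Finset.sum_neg_distrib, Finset.mul_sum]
        refine Finset.sum_congr rfl fun i _ => ?_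
        simp only [hv]
        field_simp
      have h4 : -∑ i, l i * v i ≤ sInf Sv := by
        refine le_csInf hSvne ?_
        rintro r ⟨x, hx, rfl⟩
        have h5 : ∑ i, l i * A.mulVec x i ≤ ∑ i, l i * v i := by
          refine Finset.sum_le_sum fun i _ => ?_
          by_cases h : l i = 0
          · simp [h]
          · exact mul_le_mul_of_nonneg_left (hx i h) (hl0 i)
        have h6 := hleq x
        have h7 : F x ≤ ‖x‖ := by
          calc F x ≤ |F x| := le_abs_self _
            _ ≤ ‖F‖ * ‖x‖ := by rw [← Real.norm_eq_abs]; exact F.le_opNorm x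
            _ = ‖x‖ := by rw [hFnorm, one_mul]
        linarith
      calc ∑ i, l i * (A.mulVec u i - b i) ≤ ∑ i, l i * g i := h2
        _ = ‖g‖ * -∑ i, l i * v i := h3
        _ ≤ ‖g‖ * sInf Sv := mul_le_mul_of_nonneg_left h4 (norm_nonneg g)
    have hfin : sInf Sv ≤ HoffA A :=
      le_trans (sInf_le_HJ A hlsurj v hvnorm) (HJ_le_HoffA A hlsurj)
    rw [hd]
    calc ∑ i, l i * (A.mulVec u i - b i) ≤ ‖g‖ * sInf Sv := hkey
      _ ≤ ‖g‖ * HoffA A := mul_le_mul_of_nonneg_left hfin (norm_nonneg g)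
      _ = HoffA A * ‖g‖ := mul_comm _ _
  · rw [hinf]
end KKT
end

section
/- Let A ∈ ℝ^{m×n}. If H(A) > 0, then there exist b ∈ ℝ^m with P_{A,b} := {x ∈ ℝ^n : Ax ≤ b} nonempty and u ∉ P_{A,b} such that dist(u, P_{A,b}) = H(A) · dist(b, Au + ℝ^m_+). -/
open Matrix Metric

/-- Helper: lower bound on `infDist`. -/
lemma le_infDist_aux {α : Type*} [MetricSpace α] {s : Set α} {x : α} {c : ℝ}
    (hs : s.Nonempty) (h : ∀ y ∈ s, c ≤ dist x y) : c ≤ infDist x s :=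
  le_of_not_gt fun hlt => by
    obtain ⟨y, hy, hd⟩ := (infDist_lt_iff hs).1 hlt
    exact absurd hd (not_lt.2 (h y hy))

/-- Proposition 1, tightness: if `H(A) > 0` then there exist `b`
with `P_{A,b} ≠ ∅` and `u ∉ P_{A,b}` such that
`dist(u, P_{A,b}) = H(A)·dist(b, Au + ℝ^m_+)`. -/
theorem hoffman_ineq_tight {m n : ℕ} (A : Matrix (Fin m) (Fin n) ℝ)
    (hH : 0 < HoffA A) :
    ∃ b : Fin m → ℝ, {x : Fin n → ℝ | ∀ i, A.mulVec x i ≤ b i}.Nonempty ∧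
      ∃ u : Fin n → ℝ, u ∉ {x : Fin n → ℝ | ∀ i, A.mulVec x i ≤ b i} ∧
        infDist u {x : Fin n → ℝ | ∀ i, A.mulVec x i ≤ b i} =
          HoffA A * infDist b
            {y : Fin m → ℝ | ∃ s : Fin m → ℝ, (∀ i, 0 ≤ s i) ∧ y = A.mulVec u + s} := by
  classical
  -- Step 1: the sup defining `HoffA` is attained at some `A`-surjective `J`
  have hTne : {t | ∃ J : Set (Fin m), ASurj A J ∧ t = HJ A J}.Nonempty :=
    ⟨HJ A ∅, ∅, fun w => ⟨0, fun i hi => hi.elim⟩, rfl⟩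
  have hTfin : {t | ∃ J : Set (Fin m), ASurj A J ∧ t = HJ A J}.Finite := by
    have hsub : {t | ∃ J : Set (Fin m), ASurj A J ∧ t = HJ A J} ⊆
        (fun J : Set (Fin m) => HJ A J) '' Set.univ := by
      rintro t ⟨J, _, ht⟩; exact ⟨J, trivial, ht.symm⟩
    exact (Set.finite_univ.image _).subset hsub
  obtain ⟨J, hJ, hHoff⟩ : HoffA A ∈ {t | ∃ J : Set (Fin m), ASurj A J ∧ t = HJ A J} :=
    hTne.csSup_mem hTfin
  -- The feasible set for the right-hand side `-1`
  set S : Set (Fin n → ℝ) := {x | ∀ i ∈ J, A.mulVec x i ≤ -1} with hS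
  set R : Set ℝ := {r | ∃ x : Fin n → ℝ, (∀ i ∈ J, A.mulVec x i ≤ -1) ∧ r = ‖x‖} with hR
  obtain ⟨x₀, hx₀⟩ := hJ (fun _ => -1)
  have hx₀S : x₀ ∈ S := fun i hi => hx₀ i hi
  have hRne : R.Nonempty := ⟨‖x₀‖, x₀, hx₀S, rfl⟩
  have hRbdd : BddBelow R := ⟨0, by rintro r ⟨x, -, rfl⟩; exact norm_nonneg x⟩
  -- Step 2: `HJ A J = sInf R` (the sup over `v` is attained at `v ≡ -1`)
  have hvnorm : ‖(fun _ => (-1 : ℝ) : Fin m → ℝ)‖ ≤ 1 := by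
    rw [pi_norm_le_iff_of_nonneg zero_le_one]
    intro i; simp
  have hmemHJ : sInf R ∈ {t | ∃ v : Fin m → ℝ, ‖v‖ ≤ 1 ∧
      t = sInf {r | ∃ x : Fin n → ℝ, (∀ i ∈ J, A.mulVec x i ≤ v i) ∧ r = ‖x‖}} :=
    ⟨fun _ => -1, hvnorm, rfl⟩
  have hub : ∀ t ∈ {t | ∃ v : Fin m → ℝ, ‖v‖ ≤ 1 ∧
      t = sInf {r | ∃ x : Fin n → ℝ, (∀ i ∈ J, A.mulVec x i ≤ v i) ∧ r = ‖x‖}},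
      t ≤ sInf R := by
    rintro t ⟨v, hv, rfl⟩
    refine csInf_le_csInf ⟨0, by rintro r ⟨x, -, rfl⟩; exact norm_nonneg x⟩ hRne ?_
    rintro r ⟨x, hx, rfl⟩
    refine ⟨x, fun i hi => (hx i hi).trans ?_, rfl⟩
    have h1 : |v i| ≤ 1 := by
      have := norm_le_pi_norm v i
      simpa [Real.norm_eq_abs] using this.trans hv
    linarith [neg_abs_le (v i)]
  have hHJ : HJ A J = sInf R :=
    le_antisymm (csSup_le ⟨sInf R, hmemHJ⟩ hub) (le_csSup ⟨sInf R, hub⟩ hmemHJ)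
  -- Step 3: the inf over `S` is attained
  have hScl : IsClosed S := by
    have hrw : S = ⋂ i ∈ J, {x : Fin n → ℝ | A.mulVec x i ≤ -1} := by
      ext x; simp [hS]
    rw [hrw]
    refine isClosed_biInter fun i _ => isClosed_le ?_ continuous_const
    show Continuous fun x : Fin n → ℝ => ∑ j, A i j * x j
    exact continuous_finset_sum _ fun j _ => continuous_const.mul (continuous_apply j)
  have hK : IsCompact (S ∩ Metric.closedBall 0 ‖x₀‖) :=
    (isCompact_closedBall _ _).inter_left hScl
  have hKne : (S ∩ Metric.closedBall 0 ‖x₀‖).Nonempty :=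
    ⟨x₀, hx₀S, by simp [Metric.mem_closedBall, dist_zero_right]⟩
  obtain ⟨x', hx'K, hx'min⟩ := hK.exists_isMinOn hKne (continuous_norm.continuousOn
    (f := fun x : Fin n → ℝ => ‖x‖))
  have hmin : ∀ x ∈ S, ‖x'‖ ≤ ‖x‖ := by
    intro x hx
    by_cases hc : ‖x‖ ≤ ‖x₀‖
    · exact isMinOn_iff.1 hx'min x ⟨hx, by simpa [Metric.mem_closedBall, dist_zero_right] using hc⟩
    · exact le_trans (isMinOn_iff.1 hx'min x₀
        ⟨hx₀S, by simp [Metric.mem_closedBall, dist_zero_right]⟩) (le_of_not_ge hc)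
  have hx'S : x' ∈ S := hx'K.1
  have hsInf : sInf R = ‖x'‖ :=
    le_antisymm (csInf_le hRbdd ⟨x', hx'S, rfl⟩)
      (le_csInf hRne (by rintro r ⟨x, hx, rfl⟩; exact hmin x hx))
  have hHval : HoffA A = ‖x'‖ := by rw [hHoff, hHJ, hsInf]
  have hx'pos : 0 < ‖x'‖ := hHval ▸ hH
  -- `J` is nonempty
  obtain ⟨i₀, hi₀⟩ : ∃ i, i ∈ J := by
    by_contra h
    push_neg at h
    have h0 : (0 : Fin n → ℝ) ∈ S := fun i hi => absurd hi (h i)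
    have := hmin 0 h0
    simp only [norm_zero] at this
    linarith
  -- Define `b` and take `u = 0`
  set b : Fin m → ℝ := fun i => if i ∈ J then -1 else max (A.mulVec x' i) 0 with hb
  have hx'P : x' ∈ {x : Fin n → ℝ | ∀ i, A.mulVec x i ≤ b i} := by
    intro i
    by_cases hi : i ∈ J
    · simpa [hb, hi] using hx'S i hi
    · simp only [hb, hi, if_false]
      exact le_max_left _ _
  have h0notP : (0 : Fin n → ℝ) ∉ {x : Fin n → ℝ | ∀ i, A.mulVec x i ≤ b i} := by
    intro h
    have := h i₀
    simp [hb, hi₀, Matrix.mulVec_zero] at this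
    linarith
  refine ⟨b, ⟨x', hx'P⟩, 0, h0notP, ?_⟩
  -- LHS computation
  have hLHS : infDist (0 : Fin n → ℝ) {x : Fin n → ℝ | ∀ i, A.mulVec x i ≤ b i} = ‖x'‖ := by
    apply le_antisymm
    · calc infDist (0 : Fin n → ℝ) {x : Fin n → ℝ | ∀ i, A.mulVec x i ≤ b i}
          ≤ dist 0 x' := infDist_le_dist_of_mem hx'P
        _ = ‖x'‖ := by rw [dist_comm, dist_zero_right]
    · refine le_infDist_aux ⟨x', hx'P⟩ fun y hy => ?_
      rw [dist_comm, dist_zero_right]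
      refine hmin y fun i hi => ?_
      have := hy i
      simpa [hb, hi] using this
  -- RHS computation
  have hQmem : (fun i => max (b i) 0) ∈
      {y : Fin m → ℝ | ∃ s : Fin m → ℝ, (∀ i, 0 ≤ s i) ∧ y = A.mulVec 0 + s} :=
    ⟨fun i => max (b i) 0, fun i => le_max_right _ _, by simp [Matrix.mulVec_zero]⟩
  have hRHS : infDist b {y : Fin m → ℝ | ∃ s : Fin m → ℝ, (∀ i, 0 ≤ s i) ∧
      y = A.mulVec 0 + s} = 1 := by
    apply le_antisymm
    · calc infDist b {y : Fin m → ℝ | ∃ s : Fin m → ℝ, (∀ i, 0 ≤ s i) ∧ y = A.mulVec 0 + s}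
          ≤ dist b (fun i => max (b i) 0) := infDist_le_dist_of_mem hQmem
        _ ≤ 1 := by
          rw [dist_pi_le_iff zero_le_one]
          intro i
          rw [Real.dist_eq]
          by_cases hi : i ∈ J
          · norm_num [hb, hi]
          · simp only [hb, hi, if_false]
            rw [max_eq_left (le_max_right (A.mulVec x' i) 0)]
            simp
    · refine le_infDist_aux ⟨_, hQmem⟩ ?_
      rintro y ⟨s, hs, rfl⟩
      have h1 : dist (b i₀) ((A.mulVec (0 : Fin n → ℝ) + s) i₀) ≤
          dist b (A.mulVec 0 + s) := dist_le_pi_dist b _ i₀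
      have h2 : (A.mulVec (0 : Fin n → ℝ) + s) i₀ = s i₀ := by simp [Matrix.mulVec_zero]
      rw [h2, Real.dist_eq] at h1
      have h3 : b i₀ = -1 := by simp [hb, hi₀]
      rw [h3] at h1
      have h4 := hs i₀
      have h5 : (1 : ℝ) ≤ |(-1 : ℝ) - s i₀| := by
        rw [abs_sub_comm, abs_of_nonneg (by linarith)]
        linarith
      linarith
  rw [hLHS, hRHS, hHval, mul_one]
end

section
/- Let A ∈ ℝ^{m×n}. Then for every nonempty J ∈ S(A), H_J(A) = max{ ‖v‖* : v ∈ ℝ^J_+, ‖A_Jᵀ v‖* ≤ 1 } = 1 / min{ ‖A_Jᵀ v‖* : v ∈ ℝ^J_+, ‖v‖* = 1 }. -/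
open Matrix Metric

/-- Conic Carathéodory: any nonnegative combination can be rewritten using a linearly
independent subfamily. -/
lemma cone_caratheodory {ι : Type*} [Fintype ι] [DecidableEq ι] {ρ : Type*} [Fintype ρ]
    (w : ι → (ρ → ℝ)) (x : ρ → ℝ) :
    ∀ N : ℕ, ∀ c : ι → ℝ, (Finset.univ.filter fun j => c j ≠ 0).card ≤ N →
      (∀ j, 0 ≤ c j) → x = ∑ j, c j • w j →
      ∃ (s : Finset ι) (c' : ι → ℝ), LinearIndependent ℝ (fun j : s => w j) ∧
        (∀ j, 0 ≤ c' j) ∧ (∀ j ∉ s, c' j = 0) ∧ x = ∑ j, c' j • w j := by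
  intro N
  induction N with
  | zero =>
      intro c hcard hc hx
      have hc0 : ∀ j, c j = 0 := by
        intro j
        by_contra h
        have : (Finset.univ.filter fun j => c j ≠ 0).Nonempty := ⟨j, by simp [h]⟩
        have := Finset.card_pos.mpr this
        omega
      exact ⟨∅, c, linearIndependent_empty_type, hc, fun j _ => hc0 j, hx⟩
  | succ N ih =>
      intro c hcard hc hx
      set s : Finset ι := Finset.univ.filter fun j => c j ≠ 0 with hs
      by_cases hli : LinearIndependent ℝ (fun j : s => w j)
      · refine ⟨s, c, hli, hc, fun j hj => ?_, hx⟩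
        by_contra h
        exact hj (by simp [hs, h])
      · obtain ⟨g, hg0, j₁, hj₁⟩ := Fintype.not_linearIndependent_iff.mp hli
        classical
        set lam0 : ι → ℝ := fun j => if h : j ∈ s then g ⟨j, h⟩ else 0 with hlam0
        have hlamsum : ∑ j, lam0 j • w j = 0 := by
          have h1 : ∑ j, lam0 j • w j = ∑ j ∈ s, lam0 j • w j := by
            symm
            apply Finset.sum_subset (Finset.subset_univ s)
            intro j _ hj
            simp [hlam0, hj]
          rw [h1, ← Finset.sum_attach s (fun j => lam0 j • w j), ← hg0]
          refine Finset.sum_congr rfl fun j _ => ?_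
          simp [hlam0, j.2]
        have hlamne : lam0 j₁ ≠ 0 := by simpa [hlam0, j₁.2] using hj₁
        have key : ∀ lam : ι → ℝ, (∑ j, lam j • w j = 0) → (∀ j, lam j ≠ 0 → j ∈ s) →
            (∃ j, 0 < lam j) → ∃ (s' : Finset ι) (c' : ι → ℝ),
            LinearIndependent ℝ (fun j : s' => w j) ∧ (∀ j, 0 ≤ c' j) ∧
            (∀ j ∉ s', c' j = 0) ∧ x = ∑ j, c' j • w j := by
          rintro lam hsum hsupp ⟨jp, hjp⟩
          set P : Finset ι := Finset.univ.filter fun j => 0 < lam j with hP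
          have hPne : P.Nonempty := ⟨jp, by simp [hP, hjp]⟩
          obtain ⟨j₀, hj₀P, hj₀min⟩ := P.exists_min_image (fun j => c j / lam j) hPne
          have hlamj₀ : 0 < lam j₀ := by simpa [hP] using hj₀P
          set t : ℝ := c j₀ / lam j₀ with ht
          have ht0 : 0 ≤ t := div_nonneg (hc j₀) hlamj₀.le
          set c'' : ι → ℝ := fun j => c j - t * lam j with hc''
          have hc''0 : ∀ j, 0 ≤ c'' j := by
            intro j
            by_cases h : 0 < lam j
            · have hmin : t ≤ c j / lam j := hj₀min j (by simp [hP, h])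
              have := (le_div_iff₀ h).mp hmin
              simp only [hc'']
              linarith
            · have : t * lam j ≤ 0 := mul_nonpos_of_nonneg_of_nonpos ht0 (not_lt.1 h)
              simp only [hc'']
              linarith [hc j]
          have hx'' : x = ∑ j, c'' j • w j := by
            have h2 : ∑ j, c'' j • w j = (∑ j, c j • w j) - t • ∑ j, lam j • w j := by
              rw [Finset.smul_sum, ← Finset.sum_sub_distrib]
              refine Finset.sum_congr rfl fun j _ => ?_
              simp only [hc'', sub_smul, smul_smul]
            rw [h2, hsum, smul_zero, sub_zero, hx]
          have hj₀s : j₀ ∈ s := hsupp j₀ (ne_of_gt hlamj₀)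
          have hcard'' : (Finset.univ.filter fun j => c'' j ≠ 0).card ≤ N := by
            have hsub : (Finset.univ.filter fun j => c'' j ≠ 0) ⊆ s.erase j₀ := by
              intro j hj
              simp only [Finset.mem_filter, Finset.mem_univ, true_and] at hj
              rw [Finset.mem_erase]
              constructor
              · rintro rfl
                apply hj
                simp only [hc'', ht]
                field_simp
                ring
              · by_contra hjs
                apply hj
                have hcj : c j = 0 := by
                  by_contra h'
                  exact hjs (by simp [hs, h'])
                have hlamj : lam j = 0 := by
                  by_contra h'
                  exact hjs (hsupp j h')
                simp [hc'', hcj, hlamj]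
            have h3 : (Finset.univ.filter fun j => c'' j ≠ 0).card ≤ (s.erase j₀).card :=
              Finset.card_le_card hsub
            have h4 : (s.erase j₀).card = s.card - 1 := Finset.card_erase_of_mem hj₀s
            have h5 : 1 ≤ s.card := Finset.card_pos.mpr ⟨j₀, hj₀s⟩
            omega
          exact ih c'' hcard'' hc''0 hx''
        rcases lt_trichotomy (lam0 j₁) 0 with hneg | hzero | hpos
        · refine key (fun j => - lam0 j) ?_ ?_ ⟨(j₁ : ι), by show 0 < -lam0 j₁; linarith⟩
          · simp only [neg_smul, Finset.sum_neg_distrib, hlamsum, neg_zero]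
          · intro j hj
            by_contra hjs
            exact hj (by simp [hlam0, hjs])
        · exact absurd hzero hlamne
        · refine key lam0 hlamsum ?_ ⟨(j₁ : ι), hpos⟩
          intro j hj
          by_contra hjs
          exact hj (by simp [hlam0, hjs])

/-- The cone generated by finitely many vectors is closed. -/
lemma cone_isClosed {ι : Type*} [Fintype ι] [DecidableEq ι] {ρ : Type*} [Fintype ρ] (w : ι → (ρ → ℝ)) :
    IsClosed {x : ρ → ℝ | ∃ c : ι → ℝ, (∀ j, 0 ≤ c j) ∧ x = ∑ j, c j • w j} := by
  classical
  set T : Set (Finset ι) := {s | LinearIndependent ℝ (fun j : s => w j)} with hT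
  set Cs : Finset ι → Set (ρ → ℝ) := fun s =>
    {x | ∃ c : s → ℝ, (∀ j, 0 ≤ c j) ∧ x = ∑ j : s, c j • w j} with hCs
  have hdecomp : {x : ρ → ℝ | ∃ c : ι → ℝ, (∀ j, 0 ≤ c j) ∧ x = ∑ j, c j • w j}
      = ⋃ s ∈ T, Cs s := by
    ext x
    simp only [Set.mem_setOf_eq, Set.mem_iUnion]
    constructor
    · rintro ⟨c, hc, hx⟩
      obtain ⟨s, c', hli, hc', hc'0, hx'⟩ := cone_caratheodory w x (Fintype.card ι) c
        (by simpa using Finset.card_le_card (Finset.subset_univ _)) hc hx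
      refine ⟨s, hli, fun j => c' j, fun j => hc' j, ?_⟩
      rw [hx']
      rw [Finset.sum_coe_sort s (fun j => c' j • w j)]
      symm
      apply Finset.sum_subset (Finset.subset_univ s)
      intro j _ hj
      simp [hc'0 j hj]
    · rintro ⟨s, hli, c, hc, hx⟩
      refine ⟨fun j => if h : j ∈ s then c ⟨j, h⟩ else 0, fun j => ?_, ?_⟩
      · by_cases h : j ∈ s <;> simp [h, hc]
      · rw [hx]
        have h1 : ∑ j, (if h : j ∈ s then c ⟨j, h⟩ else 0) • w j
            = ∑ j ∈ s, (if h : j ∈ s then c ⟨j, h⟩ else 0) • w j := by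
          symm
          apply Finset.sum_subset (Finset.subset_univ s)
          intro j _ hj
          simp [hj]
        rw [h1, ← Finset.sum_coe_sort s (fun j => (if h : j ∈ s then c ⟨j, h⟩ else 0) • w j)]
        refine Finset.sum_congr rfl fun j _ => ?_
        simp [j.2]
  rw [hdecomp]
  refine Set.Finite.isClosed_biUnion (Set.toFinite T) fun s hs => ?_
  -- each piece is the image of the nonnegative orthant under an injective linear map
  have hli : LinearIndependent ℝ (fun j : s => w j) := hs
  set L : ({ j // j ∈ s } → ℝ) →ₗ[ℝ] (ρ → ℝ) :=
    Fintype.linearCombination ℝ (fun j : s => w j) with hL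
  have hLapp : ∀ c : { j // j ∈ s } → ℝ, L c = ∑ j : s, c j • w j := by
    intro c
    simp [hL, Fintype.linearCombination_apply]
  have hker : LinearMap.ker L = ⊥ := by
    rw [LinearMap.ker_eq_bot']
    intro c hc
    have := Fintype.linearIndependent_iff.mp hli c (by rw [← hLapp]; exact hc)
    funext j
    exact this j
  have hemb := LinearMap.isClosedEmbedding_of_injective hker
  have hKclosed : IsClosed {c : { j // j ∈ s } → ℝ | ∀ j, 0 ≤ c j} := by
    have : {c : { j // j ∈ s } → ℝ | ∀ j, 0 ≤ c j} = ⋂ j, {c | 0 ≤ c j} := by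
      ext c; simp
    rw [this]
    exact isClosed_iInter fun j => isClosed_le continuous_const (continuous_apply j)
  have himg : Cs s = L '' {c | ∀ j, 0 ≤ c j} := by
    ext x
    simp only [hCs, Set.mem_setOf_eq, Set.mem_image]
    constructor
    · rintro ⟨c, hc, rfl⟩
      exact ⟨c, hc, (hLapp c).symm ▸ rfl⟩
    · rintro ⟨c, hc, rfl⟩
      exact ⟨c, hc, (hLapp c).symm⟩
  rw [himg]
  exact hemb.isClosedMap _ hKclosed



/-- Farkas lemma: if `M x ≤ b` is infeasible then there is `u ≥ 0` with `Mᵀ u = 0`, `⟨u,b⟩ < 0`. -/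
lemma farkas_s6 {ρ : Type*} [Fintype ρ] [DecidableEq ρ] {n : ℕ} (M : Matrix ρ (Fin n) ℝ)
    (b : ρ → ℝ)
    (h : ¬ ∃ x : Fin n → ℝ, ∀ i, M.mulVec x i ≤ b i) :
    ∃ u : ρ → ℝ, (∀ i, 0 ≤ u i) ∧ (∀ j, ∑ i, u i * M i j = 0) ∧ ∑ i, u i * b i < 0 := by
  classical
  set w : ((Fin n ⊕ Fin n) ⊕ ρ) → (ρ → ℝ) :=
    Sum.elim (Sum.elim (fun j i => M i j) (fun j i => -(M i j))) (fun i' => Pi.single i' 1)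
    with hw
  set C : Set (ρ → ℝ) := {x | ∃ c : ((Fin n ⊕ Fin n) ⊕ ρ) → ℝ, (∀ j, 0 ≤ c j) ∧ x = ∑ j, c j • w j} with hC
  have hclosed : IsClosed C := cone_isClosed w
  have hscale : ∀ t : ℝ, 0 ≤ t → ∀ x ∈ C, t • x ∈ C := by
    rintro t ht x ⟨c, hc, rfl⟩
    refine ⟨t • c, fun j => mul_nonneg ht (hc j), ?_⟩
    rw [Finset.smul_sum]
    refine Finset.sum_congr rfl fun j _ => ?_
    simp [smul_smul]
  have hconvex : Convex ℝ C := by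
    rintro x ⟨cx, hcx, rfl⟩ y ⟨cy, hcy, rfl⟩ a b' ha hb hab
    refine ⟨a • cx + b' • cy, fun j => add_nonneg (mul_nonneg ha (hcx j)) (mul_nonneg hb (hcy j)), ?_⟩
    rw [Finset.smul_sum, Finset.smul_sum, ← Finset.sum_add_distrib]
    refine Finset.sum_congr rfl fun j _ => ?_
    simp [add_smul, smul_smul]
  have hbnot : b ∉ C := by
    rintro ⟨c, hc, hb⟩
    apply h
    refine ⟨fun j => c (Sum.inl (Sum.inl j)) - c (Sum.inl (Sum.inr j)), fun i => ?_⟩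
    have hbi : b i = ∑ j, c j * w j i := by
      rw [hb]
      simp [Finset.sum_apply]
    rw [hbi, Fintype.sum_sum_type, Fintype.sum_sum_type]
    have h3 : ∑ i', c (Sum.inr i') * w (Sum.inr i') i = c (Sum.inr i) := by
      simp only [hw, Sum.elim_inr]
      rw [Finset.sum_eq_single i]
      · simp
      · intro i' _ hne
        simp [Pi.single_apply, hne]
      · simp
    rw [h3]
    have h12 : (∑ j, c (Sum.inl (Sum.inl j)) * w (Sum.inl (Sum.inl j)) i)
        + ∑ j, c (Sum.inl (Sum.inr j)) * w (Sum.inl (Sum.inr j)) i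
        = M.mulVec (fun j => c (Sum.inl (Sum.inl j)) - c (Sum.inl (Sum.inr j))) i := by
      simp only [hw, Sum.elim_inl, Sum.elim_inr, Matrix.mulVec, dotProduct]
      rw [← Finset.sum_add_distrib]
      refine Finset.sum_congr rfl fun j _ => ?_
      ring
    rw [h12]
    linarith [hc (Sum.inr i)]
  obtain ⟨f, u0, hfu, hub⟩ := geometric_hahn_banach_closed_point hconvex hclosed hbnot
  have h0C : (0 : ρ → ℝ) ∈ C := ⟨0, fun j => le_refl 0, by simp⟩
  have hu0 : 0 < u0 := by simpa using hfu 0 h0C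
  have hfC : ∀ a ∈ C, f a ≤ 0 := by
    intro a haC
    by_contra hpos
    push_neg at hpos
    have hmem := hscale ((u0 + 1) / f a) (div_nonneg (by linarith) hpos.le) a haC
    have := hfu _ hmem
    rw [_root_.map_smul, smul_eq_mul, div_mul_cancel₀ _ (ne_of_gt hpos)] at this
    linarith
  have hwC : ∀ j, w j ∈ C := by
    intro j
    refine ⟨Pi.single j 1, fun j' => ?_, ?_⟩
    · by_cases h' : j' = j <;> simp [Pi.single_apply, h']
    · rw [Finset.sum_eq_single j]
      · simp
      · intro j' _ hne
        simp [Pi.single_apply, hne]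
      · simp
  set u : ρ → ℝ := fun i => - f (Pi.single i 1) with hu
  have hrep : ∀ z : ρ → ℝ, f z = -∑ i, z i * u i := by
    intro z
    have hz : z = ∑ i, z i • (Pi.single i 1 : ρ → ℝ) := by
      have h2 : ∀ i, z i • (Pi.single i 1 : ρ → ℝ) = Pi.single i (z i) := by
        intro i
        rw [← Pi.single_smul, smul_eq_mul, mul_one]
      simp only [h2]
      exact (Finset.univ_sum_single z).symm
    conv_lhs => rw [hz]
    rw [map_sum, ← Finset.sum_neg_distrib]
    refine Finset.sum_congr rfl fun i _ => ?_
    rw [_root_.map_smul, smul_eq_mul]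
    simp only [hu]
    ring
  refine ⟨u, ?_, ?_, ?_⟩
  · intro i
    have h1 := hfC _ (hwC (Sum.inr i))
    simp only [hw, Sum.elim_inr] at h1
    simp only [hu]
    linarith
  · intro j
    have h1 := hfC _ (hwC (Sum.inl (Sum.inl j)))
    have h2 := hfC _ (hwC (Sum.inl (Sum.inr j)))
    simp only [hw, Sum.elim_inl, Sum.elim_inr] at h1 h2
    have hneg : (fun i => -(M i j)) = -(fun i => M i j) := rfl
    rw [hneg, map_neg] at h2
    have h0 : f (fun i => M i j) = 0 := le_antisymm h1 (by linarith)
    have h3 := hrep (fun i => M i j)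
    rw [h0] at h3
    have h4 : ∑ i, M i j * u i = 0 := by linarith [h3.symm]
    calc ∑ i, u i * M i j = ∑ i, M i j * u i :=
          Finset.sum_congr rfl fun i _ => by ring
      _ = 0 := h4
  · have hfb : 0 < f b := lt_trans hu0 hub
    rw [hrep b] at hfb
    have h5 : ∑ i, b i * u i < 0 := by linarith
    calc ∑ i, u i * b i = ∑ i, b i * u i := Finset.sum_congr rfl fun i _ => by ring
      _ < 0 := h5

lemma abs_sum_mul_le {d : ℕ} (w x : Fin d → ℝ) :
    |∑ j, w j * x j| ≤ (∑ j, |w j|) * ‖x‖ := by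
  calc |∑ j, w j * x j| ≤ ∑ j, |w j * x j| := Finset.abs_sum_le_sum_abs _ _
    _ ≤ ∑ j, |w j| * ‖x‖ := by
        refine Finset.sum_le_sum fun j _ => ?_
        rw [abs_mul]
        exact mul_le_mul_of_nonneg_left (by simpa using norm_le_pi_norm x j) (abs_nonneg _)
    _ = (∑ j, |w j|) * ‖x‖ := by rw [Finset.sum_mul]

lemma dualNorm_eq {d : ℕ} (v : Fin d → ℝ) : dualNorm v = ∑ i, |v i| := by
  have hub : ∀ t ∈ {t | ∃ x : Fin d → ℝ, ‖x‖ ≤ 1 ∧ t = ∑ i, v i * x i}, t ≤ ∑ i, |v i| := by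
    rintro t ⟨x, hx, rfl⟩
    calc ∑ i, v i * x i ≤ |∑ i, v i * x i| := le_abs_self _
      _ ≤ (∑ i, |v i|) * ‖x‖ := abs_sum_mul_le v x
      _ ≤ (∑ i, |v i|) * 1 := by
          exact mul_le_mul_of_nonneg_left hx (Finset.sum_nonneg fun i _ => abs_nonneg _)
      _ = ∑ i, |v i| := mul_one _
  refine le_antisymm (Real.sSup_le hub (Finset.sum_nonneg fun i _ => abs_nonneg _)) ?_
  have hmem : (∑ i, |v i|) ∈ {t | ∃ x : Fin d → ℝ, ‖x‖ ≤ 1 ∧ t = ∑ i, v i * x i} := by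
    refine ⟨fun i => if v i < 0 then -1 else 1, ?_, ?_⟩
    · rw [pi_norm_le_iff_of_nonneg zero_le_one]
      intro i
      by_cases h : v i < 0 <;> simp [h]
    · refine Finset.sum_congr rfl fun i _ => ?_
      by_cases h : v i < 0
      · simp only [if_pos h, abs_of_neg h]; ring
      · simp only [if_neg h, abs_of_nonneg (not_lt.1 h)]; ring
  exact le_csSup ⟨∑ i, |v i|, hub⟩ hmem

lemma pairing {m n : ℕ} (A : Matrix (Fin m) (Fin n) ℝ) (v : Fin m → ℝ) (x : Fin n → ℝ) :
    ∑ i, v i * A.mulVec x i = ∑ j, A.transpose.mulVec v j * x j := by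
  simp only [Matrix.mulVec, dotProduct, Matrix.transpose_apply, Finset.mul_sum,
    Finset.sum_mul]
  rw [Finset.sum_comm]
  exact Finset.sum_congr rfl fun j _ => Finset.sum_congr rfl fun i _ => by ring

lemma sum_abs_smul {d : ℕ} {c : ℝ} (hc : 0 ≤ c) (v : Fin d → ℝ) :
    ∑ i, |(c • v) i| = c * ∑ i, |v i| := by
  rw [Finset.mul_sum]
  refine Finset.sum_congr rfl fun i _ => ?_
  simp [abs_mul, abs_of_nonneg hc]

lemma single_dot {d : ℕ} (j : Fin d) (x : Fin d → ℝ) :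
    ∑ j', (Pi.single j 1 : Fin d → ℝ) j' * x j' = x j := by
  rw [Finset.sum_eq_single j]
  · simp
  · intro j' _ h
    simp [Pi.single_apply, h]
  · simp

lemma single_abs_sum {d : ℕ} (j : Fin d) :
    ∑ i, |(Pi.single j 1 : Fin d → ℝ) i| = 1 := by
  rw [Finset.sum_eq_single j]
  · simp
  · intro j' _ h
    simp [Pi.single_apply, h]
  · simp


/-- Proposition 2, first part: for every nonempty `J ∈ S(A)`,
`H_J(A) = max{‖v‖* : v ∈ ℝ^J_+, ‖A_Jᵀ v‖* ≤ 1} = 1 / min{‖A_Jᵀ v‖* : v ∈ ℝ^J_+, ‖v‖* = 1}`.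
Vectors `v ∈ ℝ^J` are rendered as vectors in `ℝ^m` vanishing outside `J`. -/
theorem hoffman_HJ_dual {m n : ℕ} (A : Matrix (Fin m) (Fin n) ℝ)
    (J : Set (Fin m)) (hJ : ASurj A J) (hne : J.Nonempty) :
    HJ A J = sSup {t | ∃ v : Fin m → ℝ, (∀ i, 0 ≤ v i) ∧ (∀ i ∉ J, v i = 0) ∧
        dualNorm (A.transpose.mulVec v) ≤ 1 ∧ t = dualNorm v} ∧
    HJ A J = 1 / sInf {t | ∃ v : Fin m → ℝ, (∀ i, 0 ≤ v i) ∧ (∀ i ∉ J, v i = 0) ∧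
        dualNorm v = 1 ∧ t = dualNorm (A.transpose.mulVec v)} := by
  classical
  obtain ⟨i₁, hi₁⟩ := hne
  obtain ⟨x₀, hx₀⟩ := hJ (fun _ => -1)
  have hx₀ne : x₀ ≠ 0 := by
    intro h0
    have h1 := hx₀ i₁ hi₁
    rw [h0, Matrix.mulVec_zero] at h1
    norm_num at h1
  have hx₀pos : 0 < ‖x₀‖ := norm_pos_iff.mpr hx₀ne
  -- the fundamental bound coming from surjectivity
  have bnd : ∀ v : Fin m → ℝ, (∀ i, 0 ≤ v i) → (∀ i ∉ J, v i = 0) →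
      ∑ i, |v i| ≤ ‖x₀‖ * ∑ j, |A.transpose.mulVec v j| := by
    intro v hv hvJ
    have h1 : ∑ i, |v i| = ∑ i, v i := Finset.sum_congr rfl fun i _ => abs_of_nonneg (hv i)
    have h2 : ∀ i, v i ≤ -(v i * A.mulVec x₀ i) := by
      intro i
      by_cases hiJ : i ∈ J
      · have h3 := hx₀ i hiJ
        nlinarith [hv i]
      · simp [hvJ i hiJ]
    calc ∑ i, |v i| = ∑ i, v i := h1
      _ ≤ ∑ i, -(v i * A.mulVec x₀ i) := Finset.sum_le_sum fun i _ => h2 i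
      _ = -∑ i, v i * A.mulVec x₀ i := by rw [Finset.sum_neg_distrib]
      _ = -∑ j, A.transpose.mulVec v j * x₀ j := by rw [pairing]
      _ ≤ |∑ j, A.transpose.mulVec v j * x₀ j| := neg_le_abs _
      _ ≤ (∑ j, |A.transpose.mulVec v j|) * ‖x₀‖ := abs_sum_mul_le _ _
      _ = ‖x₀‖ * ∑ j, |A.transpose.mulVec v j| := mul_comm _ _
  set Dset := {t | ∃ v : Fin m → ℝ, (∀ i, 0 ≤ v i) ∧ (∀ i ∉ J, v i = 0) ∧
      dualNorm (A.transpose.mulVec v) ≤ 1 ∧ t = dualNorm v} with hDset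
  set S := sSup Dset with hS
  have hDub : ∀ t ∈ Dset, t ≤ ‖x₀‖ := by
    rintro t ⟨v, hv1, hv2, hv3, rfl⟩
    rw [dualNorm_eq]
    rw [dualNorm_eq] at hv3
    calc ∑ i, |v i| ≤ ‖x₀‖ * ∑ j, |A.transpose.mulVec v j| := bnd v hv1 hv2
      _ ≤ ‖x₀‖ * 1 := mul_le_mul_of_nonneg_left hv3 (norm_nonneg _)
      _ = ‖x₀‖ := mul_one _
  have hDbdd : BddAbove Dset := ⟨‖x₀‖, hDub⟩
  have hD0 : (0:ℝ) ∈ Dset := by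
    refine ⟨0, fun i => le_refl 0, fun i _ => rfl, ?_, ?_⟩
    · rw [Matrix.mulVec_zero, dualNorm_eq]
      simp
    · rw [dualNorm_eq]; simp
  have hS0 : 0 ≤ S := le_csSup hDbdd hD0
  -- positivity of S
  have hsingle_nonneg : ∀ i, 0 ≤ (Pi.single i₁ 1 : Fin m → ℝ) i := by
    intro i
    by_cases h' : i = i₁ <;> simp [Pi.single_apply, h']
  have hsingle_supp : ∀ i ∉ J, (Pi.single i₁ 1 : Fin m → ℝ) i = 0 := by
    intro i hi
    have h' : i ≠ i₁ := fun h' => hi (h' ▸ hi₁)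
    simp [Pi.single_apply, h']
  set a := ∑ j, |A.transpose.mulVec (Pi.single i₁ 1 : Fin m → ℝ) j| with ha
  set M1 := max 1 a with hM1
  have hM1pos : (0:ℝ) < M1 := lt_of_lt_of_le one_pos (le_max_left _ _)
  have hv1val : dualNorm (M1⁻¹ • (Pi.single i₁ 1 : Fin m → ℝ)) = M1⁻¹ := by
    rw [dualNorm_eq, sum_abs_smul (inv_nonneg.mpr hM1pos.le), single_abs_sum, mul_one]
  have hv1mem : M1⁻¹ ∈ Dset := by
    refine ⟨M1⁻¹ • (Pi.single i₁ 1 : Fin m → ℝ), ?_, ?_, ?_, hv1val.symm⟩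
    · intro i
      exact mul_nonneg (inv_nonneg.mpr hM1pos.le) (hsingle_nonneg i)
    · intro i hi
      simp [Pi.smul_apply, hsingle_supp i hi]
    · rw [Matrix.mulVec_smul, dualNorm_eq, sum_abs_smul (inv_nonneg.mpr hM1pos.le), ← ha]
      have h6 : M1⁻¹ * a ≤ M1⁻¹ * M1 :=
        mul_le_mul_of_nonneg_left (le_max_right 1 a) (inv_nonneg.mpr hM1pos.le)
      rw [inv_mul_cancel₀ (ne_of_gt hM1pos)] at h6
      exact h6
  have hSpos : 0 < S := lt_of_lt_of_le (inv_pos.mpr hM1pos) (le_csSup hDbdd hv1mem)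
  -- weak duality
  have hweak : ∀ (v : Fin m → ℝ) (x : Fin n → ℝ) (y : Fin m → ℝ), (∀ i, 0 ≤ v i) →
      (∀ i ∉ J, v i = 0) → (∀ i ∈ J, A.mulVec x i ≤ y i) →
      -∑ i, v i * y i ≤ (∑ j, |A.transpose.mulVec v j|) * ‖x‖ := by
    intro v x y hv hvJ hxy
    have h2 : ∑ i, v i * A.mulVec x i ≤ ∑ i, v i * y i := by
      refine Finset.sum_le_sum fun i _ => ?_
      by_cases hiJ : i ∈ J
      · exact mul_le_mul_of_nonneg_left (hxy i hiJ) (hv i)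
      · simp [hvJ i hiJ]
    calc -∑ i, v i * y i ≤ -∑ i, v i * A.mulVec x i := by linarith
      _ = -∑ j, A.transpose.mulVec v j * x j := by rw [pairing]
      _ ≤ |∑ j, A.transpose.mulVec v j * x j| := neg_le_abs _
      _ ≤ (∑ j, |A.transpose.mulVec v j|) * ‖x‖ := abs_sum_mul_le _ _
  -- key claim via Farkas' lemma
  have hkey : ∀ y : Fin m → ℝ, ‖y‖ ≤ 1 → ∀ ε : ℝ, 0 < ε →
      ∃ x : Fin n → ℝ, (∀ i ∈ J, A.mulVec x i ≤ y i) ∧ ‖x‖ ≤ S + ε := by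
    intro y hy ε hε
    by_contra hcon
    push_neg at hcon
    set M' : Matrix (Fin m ⊕ (Fin n ⊕ Fin n)) (Fin n) ℝ :=
      Matrix.of (Sum.elim (fun i => if i ∈ J then A i else 0)
        (Sum.elim (fun j => Pi.single j 1) (fun j => -Pi.single j 1))) with hM'
    set b' : (Fin m ⊕ (Fin n ⊕ Fin n)) → ℝ :=
      Sum.elim (fun i => if i ∈ J then y i else 0) (fun _ => S + ε) with hb'
    have hinf : ¬ ∃ x : Fin n → ℝ, ∀ r, M'.mulVec x r ≤ b' r := by
      rintro ⟨x, hx⟩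
      have hxJ : ∀ i ∈ J, A.mulVec x i ≤ y i := by
        intro i hi
        have h1 := hx (Sum.inl i)
        simpa [hM', hb', Matrix.mulVec, dotProduct, hi] using h1
      have hxb : ‖x‖ ≤ S + ε := by
        rw [pi_norm_le_iff_of_nonneg (by linarith)]
        intro j
        have h1 := hx (Sum.inr (Sum.inl j))
        have h2 := hx (Sum.inr (Sum.inr j))
        have e1 : M'.mulVec x (Sum.inr (Sum.inl j)) = x j := by
          simp only [hM', Matrix.mulVec, dotProduct, Matrix.of_apply, Sum.elim_inr,
            Sum.elim_inl]
          exact single_dot j x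
        have e2 : M'.mulVec x (Sum.inr (Sum.inr j)) = -(x j) := by
          simp only [hM', Matrix.mulVec, dotProduct, Matrix.of_apply, Sum.elim_inr,
            Pi.neg_apply]
          rw [← single_dot j x, ← Finset.sum_neg_distrib]
          refine Finset.sum_congr rfl fun j' _ => by ring
        rw [e1] at h1
        rw [e2] at h2
        simp only [hb', Sum.elim_inr] at h1 h2
        rw [Real.norm_eq_abs, abs_le]
        constructor <;> linarith
      exact absurd hxb (not_le.mpr (hcon x hxJ))
    obtain ⟨u, hu0, huM, hub⟩ := farkas_s6 M' b' hinf
    set v'' : Fin m → ℝ := fun i => if i ∈ J then u (Sum.inl i) else 0 with hv''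
    have hv''0 : ∀ i, 0 ≤ v'' i := by
      intro i
      by_cases hi : i ∈ J <;> simp [hv'', hi, hu0 (Sum.inl i)]
    have hv''J : ∀ i ∉ J, v'' i = 0 := by
      intro i hi
      simp [hv'', hi]
    set p : Fin n → ℝ := fun j => u (Sum.inr (Sum.inl j)) with hp
    set q : Fin n → ℝ := fun j => u (Sum.inr (Sum.inr j)) with hq
    have hcol : ∀ j, A.transpose.mulVec v'' j = q j - p j := by
      intro j
      have h1 := huM j
      rw [Fintype.sum_sum_type, Fintype.sum_sum_type] at h1
      have e1 : ∑ i, u (Sum.inl i) * M' (Sum.inl i) j = ∑ i, v'' i * A i j := by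
        refine Finset.sum_congr rfl fun i _ => ?_
        by_cases hi : i ∈ J <;> simp [hM', hv'', hi]
      have e2 : ∑ j', u (Sum.inr (Sum.inl j')) * M' (Sum.inr (Sum.inl j')) j = p j := by
        simp only [hM', Matrix.of_apply, Sum.elim_inr, Sum.elim_inl]
        rw [Finset.sum_eq_single j]
        · simp [hp]
        · intro j' _ hne'
          simp [Pi.single_apply, hne']
        · simp
      have e3 : ∑ j', u (Sum.inr (Sum.inr j')) * M' (Sum.inr (Sum.inr j')) j = -(q j) := by
        simp only [hM', Matrix.of_apply, Sum.elim_inr, Pi.neg_apply]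
        rw [Finset.sum_eq_single j]
        · simp [hq]
        · intro j' _ hne'
          simp [Pi.single_apply, hne']
        · simp
      rw [e1, e2, e3] at h1
      have e4 : A.transpose.mulVec v'' j = ∑ i, v'' i * A i j := by
        simp only [Matrix.mulVec, dotProduct, Matrix.transpose_apply]
        refine Finset.sum_congr rfl fun i _ => by ring
      rw [e4]
      linarith
    have habs : ∀ j, |A.transpose.mulVec v'' j| ≤ p j + q j := by
      intro j
      have h1 := hu0 (Sum.inr (Sum.inl j))
      have h2 := hu0 (Sum.inr (Sum.inr j))
      rw [hcol j, abs_le]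
      constructor <;> [skip; skip] <;> simp only [hp, hq] <;> nlinarith
    set σ := ∑ j, (p j + q j) with hσ
    have hσ0 : 0 ≤ σ := Finset.sum_nonneg fun j _ =>
      add_nonneg (hu0 (Sum.inr (Sum.inl j))) (hu0 (Sum.inr (Sum.inr j)))
    have hAb : ∑ j, |A.transpose.mulVec v'' j| ≤ σ := Finset.sum_le_sum fun j _ => habs j
    have hsum_b : ∑ r, u r * b' r = (∑ i, v'' i * y i) + (S + ε) * σ := by
      rw [Fintype.sum_sum_type, Fintype.sum_sum_type]
      have e1 : ∑ i, u (Sum.inl i) * b' (Sum.inl i) = ∑ i, v'' i * y i := by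
        refine Finset.sum_congr rfl fun i _ => ?_
        by_cases hi : i ∈ J <;> simp [hb', hv'', hi]
      have e2 : (∑ j, u (Sum.inr (Sum.inl j)) * b' (Sum.inr (Sum.inl j)))
          + ∑ j, u (Sum.inr (Sum.inr j)) * b' (Sum.inr (Sum.inr j)) = (S + ε) * σ := by
        simp only [hb', Sum.elim_inr, hσ]
        rw [← Finset.sum_add_distrib, Finset.mul_sum]
        refine Finset.sum_congr rfl fun j _ => ?_
        simp only [hp, hq]
        ring
      rw [e1, ← add_assoc] at *
      rw [add_assoc, e2]
    have hneg : (∑ i, v'' i * y i) + (S + ε) * σ < 0 := by rw [← hsum_b]; exact hub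
    have hvy : -∑ i, v'' i * y i ≤ ∑ i, |v'' i| := by
      have h5 : ∀ i, -(v'' i * y i) ≤ |v'' i| := by
        intro i
        have hyi : |y i| ≤ 1 := le_trans (by simpa using norm_le_pi_norm y i) hy
        have hvi := hv''0 i
        calc -(v'' i * y i) = v'' i * (-y i) := by ring
          _ ≤ v'' i * |y i| := mul_le_mul_of_nonneg_left (neg_le_abs _) hvi
          _ ≤ v'' i * 1 := mul_le_mul_of_nonneg_left hyi hvi
          _ = |v'' i| := by rw [mul_one, abs_of_nonneg hvi]
      calc -∑ i, v'' i * y i = ∑ i, -(v'' i * y i) := by rw [Finset.sum_neg_distrib]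
        _ ≤ ∑ i, |v'' i| := Finset.sum_le_sum fun i _ => h5 i
    by_cases hσpos : 0 < σ
    · set vN := σ⁻¹ • v'' with hvN
      have hmem : dualNorm vN ∈ Dset := by
        refine ⟨vN, ?_, ?_, ?_, rfl⟩
        · intro i
          exact mul_nonneg (inv_nonneg.mpr hσ0) (hv''0 i)
        · intro i hi
          simp [hvN, Pi.smul_apply, hv''J i hi]
        · rw [hvN, Matrix.mulVec_smul, dualNorm_eq, sum_abs_smul (inv_nonneg.mpr hσ0)]
          have h6 : σ⁻¹ * ∑ j, |A.transpose.mulVec v'' j| ≤ σ⁻¹ * σ :=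
            mul_le_mul_of_nonneg_left hAb (inv_nonneg.mpr hσ0)
          rw [inv_mul_cancel₀ (ne_of_gt hσpos)] at h6
          exact h6
      have hle : dualNorm vN ≤ S := le_csSup hDbdd hmem
      have hval : dualNorm vN = σ⁻¹ * ∑ i, |v'' i| := by
        rw [hvN, dualNorm_eq, sum_abs_smul (inv_nonneg.mpr hσ0)]
      have hgt : S + ε < dualNorm vN := by
        rw [hval]
        have h7 : (S + ε) * σ < -∑ i, v'' i * y i := by linarith
        have h8 : (S + ε) * σ < ∑ i, |v'' i| := lt_of_lt_of_le h7 hvy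
        have h9 : σ⁻¹ * ((S + ε) * σ) < σ⁻¹ * ∑ i, |v'' i| :=
          mul_lt_mul_of_pos_left h8 (inv_pos.mpr hσpos)
        calc S + ε = σ⁻¹ * ((S + ε) * σ) := by
              field_simp
            _ < σ⁻¹ * ∑ i, |v'' i| := h9
      linarith
    · have hσeq : σ = 0 := le_antisymm (not_lt.mp hσpos) hσ0
      have hA0 : ∑ j, |A.transpose.mulVec v'' j| ≤ 0 := by rw [← hσeq]; exact hAb
      have hv0 : ∑ i, |v'' i| ≤ 0 := by
        have := bnd v'' hv''0 hv''J
        nlinarith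
      have h7 : -∑ i, v'' i * y i ≤ 0 := le_trans hvy hv0
      rw [hσeq] at hneg
      linarith
  -- properties of the inner inf
  have hInne : ∀ y : Fin m → ℝ,
      Set.Nonempty {r | ∃ x : Fin n → ℝ, (∀ i ∈ J, A.mulVec x i ≤ y i) ∧ r = ‖x‖} := by
    intro y
    obtain ⟨x, hx⟩ := hJ y
    exact ⟨‖x‖, x, hx, rfl⟩
  have hInbdd : ∀ y : Fin m → ℝ,
      BddBelow {r | ∃ x : Fin n → ℝ, (∀ i ∈ J, A.mulVec x i ≤ y i) ∧ r = ‖x‖} := by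
    intro y
    refine ⟨0, ?_⟩
    rintro r ⟨x, hx, rfl⟩
    exact norm_nonneg x
  set g : (Fin m → ℝ) → ℝ :=
    fun y => sInf {r | ∃ x : Fin n → ℝ, (∀ i ∈ J, A.mulVec x i ≤ y i) ∧ r = ‖x‖} with hgdef
  have hg0 : ∀ y, 0 ≤ g y := by
    intro y
    refine Real.sInf_nonneg ?_
    rintro r ⟨x, hx, rfl⟩
    exact norm_nonneg x
  have hgS : ∀ y : Fin m → ℝ, ‖y‖ ≤ 1 → g y ≤ S := by
    intro y hy
    have h6 : ∀ ε : ℝ, 0 < ε → g y ≤ S + ε := by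
      intro ε hε
      obtain ⟨x, hx1, hx2⟩ := hkey y hy ε hε
      exact le_trans (csInf_le (hInbdd y) ⟨x, hx1, rfl⟩) hx2
    by_contra hcon
    push_neg at hcon
    have := h6 ((g y - S)/2) (by linarith)
    linarith
  have hHJdef : HJ A J = sSup {t | ∃ y : Fin m → ℝ, ‖y‖ ≤ 1 ∧ t = g y} := rfl
  have hHJub : ∀ t ∈ {t | ∃ y : Fin m → ℝ, ‖y‖ ≤ 1 ∧ t = g y}, t ≤ S := by
    rintro t ⟨y, hy, rfl⟩
    exact hgS y hy
  have hHJbdd : BddAbove {t | ∃ y : Fin m → ℝ, ‖y‖ ≤ 1 ∧ t = g y} := ⟨S, hHJub⟩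
  have hHJle : HJ A J ≤ S := by
    rw [hHJdef]
    exact Real.sSup_le hHJub hS0
  have hHJ0 : 0 ≤ HJ A J := by
    have hmem : g 0 ∈ {t | ∃ y : Fin m → ℝ, ‖y‖ ≤ 1 ∧ t = g y} := ⟨0, by simp, rfl⟩
    rw [hHJdef]
    exact le_trans (hg0 0) (le_csSup hHJbdd hmem)
  have hSle : S ≤ HJ A J := by
    refine Real.sSup_le ?_ hHJ0
    rintro t ⟨v, hv1, hv2, hv3, rfl⟩
    set ym : Fin m → ℝ := fun _ => -1 with hym
    have hymnorm : ‖ym‖ ≤ 1 := by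
      rw [pi_norm_le_iff_of_nonneg zero_le_one]
      intro i
      simp [hym]
    have hgmem : g ym ∈ {t | ∃ y : Fin m → ℝ, ‖y‖ ≤ 1 ∧ t = g y} := ⟨ym, hymnorm, rfl⟩
    have h7 : dualNorm v ≤ g ym := by
      refine le_csInf (hInne ym) ?_
      rintro r ⟨x, hx, rfl⟩
      have h8 := hweak v x ym hv1 hv2 hx
      have h9 : -∑ i, v i * ym i = ∑ i, v i := by
        rw [← Finset.sum_neg_distrib]
        refine Finset.sum_congr rfl fun i _ => ?_
        simp [hym]
      have h10 : ∑ j, |A.transpose.mulVec v j| ≤ 1 := by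
        rw [← dualNorm_eq]
        exact hv3
      have h11 : ∑ i, |v i| = ∑ i, v i := Finset.sum_congr rfl fun i _ => abs_of_nonneg (hv1 i)
      rw [dualNorm_eq, h11, ← h9]
      calc -∑ i, v i * ym i ≤ (∑ j, |A.transpose.mulVec v j|) * ‖x‖ := h8
        _ ≤ 1 * ‖x‖ := mul_le_mul_of_nonneg_right h10 (norm_nonneg _)
        _ = ‖x‖ := one_mul _
    exact le_trans h7 (le_csSup hHJbdd hgmem)
  have hfirst : HJ A J = S := le_antisymm hHJle hSle
  -- second equality
  set E := {t | ∃ v : Fin m → ℝ, (∀ i, 0 ≤ v i) ∧ (∀ i ∉ J, v i = 0) ∧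
      dualNorm v = 1 ∧ t = dualNorm (A.transpose.mulVec v)} with hE
  have hEne : E.Nonempty := by
    refine ⟨dualNorm (A.transpose.mulVec (Pi.single i₁ 1 : Fin m → ℝ)),
      (Pi.single i₁ 1 : Fin m → ℝ), hsingle_nonneg, hsingle_supp, ?_, rfl⟩
    rw [dualNorm_eq, single_abs_sum]
  have hElb : ∀ t ∈ E, 1/S ≤ t := by
    rintro t ⟨v, hv1, hv2, hv3, rfl⟩
    have hv3' : ∑ i, |v i| = 1 := by rw [← dualNorm_eq]; exact hv3
    have h12 : (1:ℝ) ≤ ‖x₀‖ * ∑ j, |A.transpose.mulVec v j| := by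
      rw [← hv3']
      exact bnd v hv1 hv2
    have htnn : 0 ≤ ∑ j, |A.transpose.mulVec v j| :=
      Finset.sum_nonneg fun j _ => abs_nonneg _
    have htpos : 0 < ∑ j, |A.transpose.mulVec v j| := by nlinarith
    rw [dualNorm_eq]
    set tv := ∑ j, |A.transpose.mulVec v j| with htv
    have hval : dualNorm (tv⁻¹ • v) = tv⁻¹ := by
      rw [dualNorm_eq, sum_abs_smul (inv_nonneg.mpr htpos.le), hv3', mul_one]
    have hmem : tv⁻¹ ∈ Dset := by
      refine ⟨tv⁻¹ • v, ?_, ?_, ?_, hval.symm⟩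
      · intro i
        exact mul_nonneg (inv_nonneg.mpr htpos.le) (hv1 i)
      · intro i hi
        simp [Pi.smul_apply, hv2 i hi]
      · rw [Matrix.mulVec_smul, dualNorm_eq, sum_abs_smul (inv_nonneg.mpr htpos.le), ← htv,
          inv_mul_cancel₀ (ne_of_gt htpos)]
    have h13 : tv⁻¹ ≤ S := le_csSup hDbdd hmem
    rw [div_le_iff₀ hSpos]
    have h14 : tv * tv⁻¹ ≤ tv * S := mul_le_mul_of_nonneg_left h13 htpos.le
    rw [mul_inv_cancel₀ (ne_of_gt htpos)] at h14
    linarith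
  set μ := sInf E with hμ
  have hμlb : 1/S ≤ μ := le_csInf hEne hElb
  have hμpos : 0 < μ := lt_of_lt_of_le (div_pos one_pos hSpos) hμlb
  have hEbdd : BddBelow E := ⟨1/S, hElb⟩
  have hSμ : ∀ t ∈ Dset, t ≤ 1/μ := by
    rintro t ⟨v, hv1, hv2, hv3, rfl⟩
    rw [dualNorm_eq]
    set dv := ∑ i, |v i| with hdv
    have hdvnn : 0 ≤ dv := Finset.sum_nonneg fun i _ => abs_nonneg _
    rcases eq_or_lt_of_le hdvnn with heq | hpos
    · rw [← heq]
      positivity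
    · set vN := dv⁻¹ • v with hvN
      have hvNnorm : dualNorm vN = 1 := by
        rw [hvN, dualNorm_eq, sum_abs_smul (inv_nonneg.mpr hdvnn), ← hdv,
          inv_mul_cancel₀ (ne_of_gt hpos)]
      have hmem : dualNorm (A.transpose.mulVec vN) ∈ E := by
        refine ⟨vN, ?_, ?_, hvNnorm, rfl⟩
        · intro i
          exact mul_nonneg (inv_nonneg.mpr hdvnn) (hv1 i)
        · intro i hi
          simp [hvN, Pi.smul_apply, hv2 i hi]
      have h13 : μ ≤ dualNorm (A.transpose.mulVec vN) := csInf_le hEbdd hmem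
      have h14 : dualNorm (A.transpose.mulVec vN) = dv⁻¹ * dualNorm (A.transpose.mulVec v) := by
        rw [hvN, Matrix.mulVec_smul, dualNorm_eq, sum_abs_smul (inv_nonneg.mpr hdvnn),
          ← dualNorm_eq]
      have h15 : μ ≤ dv⁻¹ := by
        rw [h14] at h13
        have h16 : dv⁻¹ * dualNorm (A.transpose.mulVec v) ≤ dv⁻¹ * 1 :=
          mul_le_mul_of_nonneg_left hv3 (inv_nonneg.mpr hdvnn)
        linarith
      rw [le_div_iff₀ hμpos]
      have h17 : dv * μ ≤ dv * dv⁻¹ := mul_le_mul_of_nonneg_left h15 hdvnn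
      rw [mul_inv_cancel₀ (ne_of_gt hpos)] at h17
      exact h17
  have hμub : μ ≤ 1/S := by
    have h17 : S ≤ 1/μ := Real.sSup_le hSμ (le_of_lt (div_pos one_pos hμpos))
    rw [le_div_iff₀ hμpos] at h17
    rw [le_div_iff₀ hSpos]
    linarith [mul_comm S μ]
  have hμeq : μ = 1/S := le_antisymm hμub hμlb
  constructor
  · exact hfirst
  · rw [hfirst, hμeq, one_div_one_div]
end

section
/- Let A ∈ ℝ^{m×n}. Suppose 𝓕 ⊆ S(A) and 𝓘 ⊆ 2^{{1,…,m}} \ S(A) are such that for every J ⊆ {1,…,m}, either J ⊆ F for some F ∈ 𝓕, or I ⊆ J for some I ∈ 𝓘. Then H(A) = max_{F∈𝓕} H_F(A). -/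
open Matrix Metric

lemma asurj_mono {m n : ℕ} {A : Matrix (Fin m) (Fin n) ℝ} {J K : Set (Fin m)}
    (hJK : J ⊆ K) (hK : ASurj A K) : ASurj A J := fun w => by
  obtain ⟨x, hx⟩ := hK w
  exact ⟨x, fun i hi => hx i (hJK hi)⟩

lemma HJ_bddAbove {m n : ℕ} (A : Matrix (Fin m) (Fin n) ℝ) {K : Set (Fin m)}
    (hK : ASurj A K) :
    BddAbove {t | ∃ v : Fin m → ℝ, ‖v‖ ≤ 1 ∧
      t = sInf {r | ∃ x : Fin n → ℝ, (∀ i ∈ K, A.mulVec x i ≤ v i) ∧ r = ‖x‖}} := by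
  choose p hp using fun i => hK (Pi.single i 1)
  choose q hq using fun i => hK (Pi.single i (-1))
  refine ⟨∑ i, (‖p i‖ + ‖q i‖), ?_⟩
  rintro t ⟨v, hv, rfl⟩
  set x : Fin n → ℝ :=
    ∑ i, (if 0 ≤ v i then v i • p i else (-v i) • q i) with hxdef
  have hAx : A.mulVec x =
      ∑ i, (if 0 ≤ v i then v i • A.mulVec (p i) else (-v i) • A.mulVec (q i)) := by
    rw [hxdef, show A.mulVec = A.mulVecLin from rfl, map_sum]
    refine Finset.sum_congr rfl fun i _ => ?_
    split_ifs <;> simp [Matrix.mulVec_smul, Matrix.mulVec_neg]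
  have hfeas : ∀ j ∈ K, A.mulVec x j ≤ v j := by
    intro j hj
    rw [hAx]
    have : (∑ i, (if 0 ≤ v i then v i • A.mulVec (p i) else (-v i) • A.mulVec (q i))) j
        = ∑ i, (if 0 ≤ v i then v i • A.mulVec (p i) else (-v i) • A.mulVec (q i)) j := by
      simp
    rw [this]
    have hle : ∀ i, (if 0 ≤ v i then v i • A.mulVec (p i) else (-v i) • A.mulVec (q i)) j
        ≤ (Pi.single i (v i) : Fin m → ℝ) j := by
      intro i
      by_cases h : 0 ≤ v i
      · simp only [h, if_true, Pi.smul_apply, smul_eq_mul]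
        calc v i * A.mulVec (p i) j ≤ v i * (Pi.single i 1 : Fin m → ℝ) j :=
              mul_le_mul_of_nonneg_left (hp i j hj) h
          _ = (Pi.single i (v i) : Fin m → ℝ) j := by
              rcases eq_or_ne j i with rfl | hne
              · simp
              · simp [Pi.single_apply, hne]
      · simp only [h, if_false, Pi.smul_apply, smul_eq_mul]
        have h' : 0 ≤ -v i := by linarith [lt_of_not_ge h]
        calc (-v i) * A.mulVec (q i) j ≤ (-v i) * (Pi.single i (-1) : Fin m → ℝ) j :=
              mul_le_mul_of_nonneg_left (hq i j hj) h'
          _ = (Pi.single i (v i) : Fin m → ℝ) j := by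
              rcases eq_or_ne j i with rfl | hne
              · simp
              · simp [Pi.single_apply, hne]
    calc ∑ i, (if 0 ≤ v i then v i • A.mulVec (p i) else (-v i) • A.mulVec (q i)) j
        ≤ ∑ i, (Pi.single i (v i) : Fin m → ℝ) j := Finset.sum_le_sum fun i _ => hle i
      _ = v j := by rw [← Finset.sum_apply]; simp [Finset.univ_sum_single]
  have hvi : ∀ i, |v i| ≤ 1 := fun i => le_trans (by
    have := norm_le_pi_norm v i
    rwa [Real.norm_eq_abs] at this) hv
  have hnorm : ‖x‖ ≤ ∑ i, (‖p i‖ + ‖q i‖) := by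
    rw [hxdef]
    refine le_trans (norm_sum_le _ _) (Finset.sum_le_sum fun i _ => ?_)
    by_cases h : 0 ≤ v i
    · simp only [h, if_true, norm_smul, Real.norm_eq_abs]
      calc |v i| * ‖p i‖ ≤ 1 * ‖p i‖ :=
            mul_le_mul_of_nonneg_right (hvi i) (norm_nonneg _)
        _ ≤ ‖p i‖ + ‖q i‖ := by simp [norm_nonneg]
    · simp only [h, if_false, norm_smul, Real.norm_eq_abs, abs_neg]
      calc |v i| * ‖q i‖ ≤ 1 * ‖q i‖ :=
            mul_le_mul_of_nonneg_right (hvi i) (norm_nonneg _)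
        _ ≤ ‖p i‖ + ‖q i‖ := by
            rw [one_mul]; linarith [norm_nonneg (p i)]
  have hbdd : BddBelow {r | ∃ x' : Fin n → ℝ, (∀ i ∈ K, A.mulVec x' i ≤ v i) ∧ r = ‖x'‖} :=
    ⟨0, by rintro r ⟨x', _, rfl⟩; exact norm_nonneg _⟩
  exact le_trans (csInf_le hbdd ⟨x, hfeas, rfl⟩) hnorm

lemma HJ_nonneg {m n : ℕ} (A : Matrix (Fin m) (Fin n) ℝ) {K : Set (Fin m)}
    (hK : ASurj A K) : 0 ≤ HJ A K := by
  have hbdd := HJ_bddAbove A hK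
  have hmem : sInf {r | ∃ x : Fin n → ℝ, (∀ i ∈ K, A.mulVec x i ≤ (0 : Fin m → ℝ) i) ∧ r = ‖x‖}
      ∈ {t | ∃ v : Fin m → ℝ, ‖v‖ ≤ 1 ∧
        t = sInf {r | ∃ x : Fin n → ℝ, (∀ i ∈ K, A.mulVec x i ≤ v i) ∧ r = ‖x‖}} :=
    ⟨0, by simp, rfl⟩
  refine le_trans ?_ (le_csSup hbdd hmem)
  exact Real.sInf_nonneg (by rintro r ⟨x', _, rfl⟩; exact norm_nonneg _)

lemma HJ_mono {m n : ℕ} (A : Matrix (Fin m) (Fin n) ℝ) {J K : Set (Fin m)}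
    (hJK : J ⊆ K) (hK : ASurj A K) : HJ A J ≤ HJ A K := by
  have hbddK := HJ_bddAbove A hK
  refine Real.sSup_le ?_ (HJ_nonneg A hK)
  rintro t ⟨v, hv, rfl⟩
  have hsub : {r | ∃ x : Fin n → ℝ, (∀ i ∈ K, A.mulVec x i ≤ v i) ∧ r = ‖x‖}
      ⊆ {r | ∃ x : Fin n → ℝ, (∀ i ∈ J, A.mulVec x i ≤ v i) ∧ r = ‖x‖} := by
    rintro r ⟨x, hx, rfl⟩
    exact ⟨x, fun i hi => hx i (hJK hi), rfl⟩
  have hKne : {r | ∃ x : Fin n → ℝ, (∀ i ∈ K, A.mulVec x i ≤ v i) ∧ r = ‖x‖}.Nonempty := by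
    obtain ⟨x, hx⟩ := hK v
    exact ⟨‖x‖, x, hx, rfl⟩
  have hbddJ : BddBelow {r | ∃ x : Fin n → ℝ, (∀ i ∈ J, A.mulVec x i ≤ v i) ∧ r = ‖x‖} :=
    ⟨0, by rintro r ⟨x', _, rfl⟩; exact norm_nonneg _⟩
  refine le_trans (csInf_le_csInf hbddJ hKne hsub) (le_csSup hbddK ⟨v, hv, rfl⟩)

/-- Corollary 1: if `𝓕 ⊆ S(A)` and `𝓘 ⊆ 2^{1..m} \ S(A)` jointly
certify all subsets of `{1,…,m}`, then `H(A) = max_{F ∈ 𝓕} H_F(A)`. -/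
theorem hoffman_certificates {m n : ℕ} (A : Matrix (Fin m) (Fin n) ℝ)
    (F I : Set (Set (Fin m)))
    (hF : ∀ J ∈ F, ASurj A J) (hI : ∀ J ∈ I, ¬ ASurj A J)
    (hcover : ∀ J : Set (Fin m), (∃ F' ∈ F, J ⊆ F') ∨ (∃ I' ∈ I, I' ⊆ J)) :
    HoffA A = sSup {t | ∃ F' ∈ F, t = HJ A F'} := by
  set S2 : Set ℝ := {t | ∃ F' ∈ F, t = HJ A F'} with hS2def
  set S1 : Set ℝ := {t | ∃ J : Set (Fin m), ASurj A J ∧ t = HJ A J} with hS1def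
  obtain ⟨F0, hF0F, -⟩ : ∃ F' ∈ F, (∅ : Set (Fin m)) ⊆ F' := by
    rcases hcover ∅ with h | ⟨I', hI', hsub⟩
    · exact h
    · exact absurd (show ASurj A I' from fun w =>
        ⟨0, fun i hi => absurd (hsub hi) (Set.notMem_empty i)⟩) (hI I' hI')
  have hS2S1 : S2 ⊆ S1 := by
    rintro t ⟨F', hF', rfl⟩
    exact ⟨F', hF F' hF', rfl⟩
  have key : ∀ t ∈ S1, ∃ s ∈ S2, t ≤ s := by
    rintro t ⟨J, hJ, rfl⟩
    rcases hcover J with ⟨F', hF', hsub⟩ | ⟨I', hI', hsub⟩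
    · exact ⟨HJ A F', ⟨F', hF', rfl⟩, HJ_mono A hsub (hF F' hF')⟩
    · exact absurd (asurj_mono hsub hJ) (hI I' hI')
  have hS2ne : S2.Nonempty := ⟨HJ A F0, F0, hF0F, rfl⟩
  have hS2bdd : BddAbove S2 := by
    have : S2 = HJ A '' F := by
      ext t; constructor
      · rintro ⟨F', hF', rfl⟩; exact ⟨F', hF', rfl⟩
      · rintro ⟨F', hF', rfl⟩; exact ⟨F', hF', rfl⟩
    rw [this]
    exact ((Set.toFinite F).image _).bddAbove
  have hle : ∀ t ∈ S1, t ≤ sSup S2 := by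
    intro t ht
    obtain ⟨s, hs, hts⟩ := key t ht
    exact le_trans hts (le_csSup hS2bdd hs)
  have h0 : 0 ≤ sSup S2 :=
    le_trans (HJ_nonneg A (hF F0 hF0F)) (le_csSup hS2bdd ⟨F0, hF0F, rfl⟩)
  refine le_antisymm (Real.sSup_le hle h0) (csSup_le_csSup ⟨sSup S2, hle⟩ hS2ne hS2S1)
end
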